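/- arXiv:2011.05169 — 4 statements merged into one kernel-verified Lean document; each statement's English description precedes it below -/
import Mathlib

section
/- Let G=(V,E) be a complete p-partite multigraph with p≥3. Then Ncond(Ǧ) ⊆ stab(G,Φ) for every admissible matching policy Φ: for every μ∈Ncond(Ǧ), the Markov chain (W_n) of the model (G,Φ,μ) is positive recurrent. -/
open scoped BigOperators

attribute [local instance] Classical.propDecidable

/-- A multigraph on the vertex set `V`: a symmetric binary relation on `V`,
possibly with self-loops. -/
structure Multigraph (V : Type*) where
  Adj : V → V → Prop
  symm : ∀ u v, Adj u v → Adj v u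

namespace Multigraph

variable {V : Type*}

/-- The neighborhood `E(U)` of a set `U` of vertices. -/
def nbhd (G : Multigraph V) (U : Set V) : Set V :=
  {v | ∃ u ∈ U, G.Adj u v}

/-- `V₁`, the set of self-looped vertices. -/
def loopSet (G : Multigraph V) : Set V := {v | G.Adj v v}

/-- `V₂`, the set of non-self-looped vertices. -/
def nonloopSet (G : Multigraph V) : Set V := {v | ¬ G.Adj v v}

/-- The maximal subgraph `Ǧ`, obtained by deleting all self-loops. -/
def check (G : Multigraph V) : Multigraph V where
  Adj u v := G.Adj u v ∧ u ≠ v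
  symm u v h := ⟨G.symm u v h.1, h.2.symm⟩

/-- An independent set: a nonempty set of pairwise non-adjacent vertices. -/
def IsIndep (G : Multigraph V) (I : Set V) : Prop :=
  I.Nonempty ∧ ∀ i ∈ I, ∀ j ∈ I, ¬ G.Adj i j

/-- Connectivity of a multigraph: any two nodes are joined by a path of edges. -/
def Connected (G : Multigraph V) : Prop :=
  ∀ u v : V, Relation.ReflTransGen G.Adj u v

/-- `G` is a bipartite graph: its vertex set splits into two parts such that every
edge joins the two parts (in particular, `G` has no self-loop). -/
def IsBipartiteGraph (G : Multigraph V) : Prop :=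
  ∃ A B : Set V, (∀ v, v ∈ A ∨ v ∈ B) ∧ (∀ v, ¬(v ∈ A ∧ v ∈ B)) ∧
    ∀ u v, G.Adj u v → (u ∈ A ∧ v ∈ B) ∨ (u ∈ B ∧ v ∈ A)

section Meas

variable [Fintype V]

/-- Total mass `μ(S)` of a set of vertices. -/
noncomputable def mass (μ : V → ℝ) (S : Set V) : ℝ := ∑ v, S.indicator μ v

/-- `μ ∈ ℳ(V)`: a probability measure with full support on `V`. -/
def FullSupport (μ : V → ℝ) : Prop := (∀ v, 0 < μ v) ∧ ∑ v, μ v = 1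

/-- The stability condition `Ncond(G)`: fully supported probability measures `μ` such
that `μ(I) < μ(E(I))` for every independent set `I` of `G`. -/
def Ncond (G : Multigraph V) (μ : V → ℝ) : Prop :=
  FullSupport μ ∧ ∀ I : Set V, G.IsIndep I → mass μ I < mass μ (G.nbhd I)

/-- The degree of a vertex: its number of neighbors (including itself if self-looped). -/
noncomputable def deg (G : Multigraph V) (i : V) : ℕ := (G.nbhd {i}).ncard

end Meas
section Chain

variable [DecidableEq V]

/-- The state space `𝕎` of admissible queue details. -/
def WSpace (G : Multigraph V) : Set (List V) :=
  {w | (∀ i j : V, i ≠ j → G.Adj i j → w.count i = 0 ∨ w.count j = 0) ∧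
    ∀ i : V, G.Adj i i → w.count i ≤ 1}

/-- An admissible matching policy: a (possibly random) transition rule which, in state
`w` upon the arrival of an item of class `v`, appends `v` when no compatible item is in
line, and otherwise deletes one stored item of a class compatible with `v`. -/
structure Policy (G : Multigraph V) where
  next : List V → V → List V → ℝ
  nonneg : ∀ w v w', 0 ≤ next w v w'
  total : ∀ w ∈ WSpace G, ∀ v : V, (∑' w' : List V, next w v w') = 1
  noMatch : ∀ w ∈ WSpace G, ∀ v : V, (∀ a ∈ w, ¬ G.Adj a v) → next w v (w ++ [v]) = 1
  matchRule : ∀ w ∈ WSpace G, ∀ v : V, (∃ a ∈ w, G.Adj a v) → ∀ w' : List V,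
    next w v w' ≠ 0 → ∃ k : Fin w.length, G.Adj (w.get k) v ∧ w' = w.eraseIdx k

/-- The transition kernel of the buffer-content Markov chain of the model `(G,Φ,μ)`. -/
noncomputable def kernel [Fintype V] (G : Multigraph V) (pol : Policy G) (μ : V → ℝ)
    (w w' : List V) : ℝ :=
  ∑ v : V, μ v * pol.next w v w'

/-- Irreducibility (on the state space `𝕎`) of a transition kernel. -/
def Irreducible (G : Multigraph V) (P : List V → List V → ℝ) : Prop :=
  ∀ w ∈ WSpace G, ∀ w' ∈ WSpace G, Relation.ReflTransGen (fun a b => 0 < P a b) w w'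

/-- A stationary probability distribution, supported on `𝕎`, for a transition kernel. -/
def IsStationary (G : Multigraph V) (P : List V → List V → ℝ) (π : List V → ℝ) :
    Prop :=
  (∀ w, 0 ≤ π w) ∧ (∀ w ∉ WSpace G, π w = 0) ∧ (∑' w : List V, π w) = 1 ∧
    ∀ w' : List V, (∑' w : List V, π w * P w w') = π w'

/-- Positive recurrence of the chain: irreducibility together with the existence of a
stationary probability distribution. -/
def PositiveRecurrent (G : Multigraph V) (P : List V → List V → ℝ) : Prop :=
  Irreducible G P ∧ ∃ π : List V → ℝ, IsStationary G P π

end Chain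
/-- `G` is a complete `p`-partite multigraph: its maximal subgraph `Ǧ` is complete
`p`-partite, i.e. the vertex set partitions into `p` (maximal independent) parts, two
nodes being `Ǧ`-adjacent iff they lie in distinct parts. -/
def CompletePPartite (G : Multigraph V) (p : ℕ) : Prop :=
  ∃ f : V → Fin p, Function.Surjective f ∧ ∀ u v : V, (check G).Adj u v ↔ f u ≠ f v
end Multigraph

open Multigraph

namespace StabProofAux
set_option linter.unusedSectionVars false
open Multigraph Filter

variable {V : Type*} [Fintype V] [DecidableEq V]

/-- The finite set of lists over `V` of length at most `n`. -/
noncomputable def listsLE (V : Type*) [Fintype V] [DecidableEq V] (n : ℕ) :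
    Finset (List V) :=
  (Finset.range (n+1)).biUnion fun m =>
    Finset.univ.image fun g : Fin m → V => List.ofFn g

lemma mem_listsLE {n : ℕ} {l : List V} : l ∈ listsLE V n ↔ l.length ≤ n := by
  constructor
  · intro h
    simp only [listsLE, Finset.mem_biUnion, Finset.mem_range, Finset.mem_image,
      Finset.mem_univ, true_and] at h
    obtain ⟨m, hm, g, rfl⟩ := h
    simpa [List.length_ofFn] using Nat.lt_succ_iff.mp hm
  · intro h
    simp only [listsLE, Finset.mem_biUnion, Finset.mem_range, Finset.mem_image,
      Finset.mem_univ, true_and]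
    exact ⟨l.length, Nat.lt_succ_iff.mpr h, l.get, List.ofFn_get l⟩

/-- Possible successor states: append a letter or erase a letter. -/
noncomputable def succs (w : List V) : Finset (List V) :=
  (Finset.univ.image fun v : V => w ++ [v]) ∪
    (Finset.range w.length).image fun k => w.eraseIdx k

lemma append_mem_succs (w : List V) (v : V) : w ++ [v] ∈ succs w := by
  simp [succs]

lemma eraseIdx_mem_succs (w : List V) (k : ℕ) (hk : k < w.length) :
    w.eraseIdx k ∈ succs w := by
  simp only [succs, Finset.mem_union, Finset.mem_image, Finset.mem_range]
  exact Or.inr ⟨k, hk, rfl⟩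

lemma length_le_of_mem_succs {w w' : List V} (h : w' ∈ succs w) :
    w'.length ≤ w.length + 1 := by
  simp only [succs, Finset.mem_union, Finset.mem_image, Finset.mem_univ, true_and,
    Finset.mem_range] at h
  rcases h with ⟨v, rfl⟩ | ⟨k, hk, rfl⟩
  · simp
  · rw [List.length_eraseIdx]
    split <;> omega

variable (G : Multigraph V)

/-- No stored item matches the arriving class `v`. -/
def NoMatch (w : List V) (v : V) : Prop := ∀ a ∈ w, ¬ G.Adj a v

variable (pol : Policy G)

lemma next_le_one {w : List V} (hw : w ∈ WSpace G) (v : V) (w' : List V) :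
    pol.next w v w' ≤ 1 := by
  have htot := pol.total w hw v
  have hsum : Summable (pol.next w v) := by
    by_contra hns
    rw [tsum_eq_zero_of_not_summable hns] at htot
    norm_num at htot
  calc pol.next w v w' ≤ ∑' u, pol.next w v u :=
        hsum.le_tsum w' fun u _ => pol.nonneg w v u
    _ = 1 := htot

lemma next_eq_zero_of_noMatch {w : List V} (hw : w ∈ WSpace G) {v : V}
    (hnm : NoMatch G w v) {w' : List V} (hne : w' ≠ w ++ [v]) :
    pol.next w v w' = 0 := by
  have htot := pol.total w hw v
  have hsum : Summable (pol.next w v) := by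
    by_contra hns
    rw [tsum_eq_zero_of_not_summable hns] at htot
    norm_num at htot
  have h1 : pol.next w v (w ++ [v]) = 1 := pol.noMatch w hw v hnm
  have hpair : pol.next w v (w ++ [v]) + pol.next w v w' ≤ 1 := by
    have := Summable.sum_le_tsum ({w ++ [v], w'} : Finset (List V))
      (fun u _ => pol.nonneg w v u) hsum
    rw [htot] at this
    rwa [Finset.sum_pair (Ne.symm hne)] at this
  have := pol.nonneg w v w'
  linarith

lemma next_cases {w : List V} (hw : w ∈ WSpace G) {v : V} {w' : List V}
    (h : pol.next w v w' ≠ 0) :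
    (NoMatch G w v ∧ w' = w ++ [v]) ∨
      ((∃ a ∈ w, G.Adj a v) ∧ ∃ k : Fin w.length, w' = w.eraseIdx k) := by
  by_cases hnm : NoMatch G w v
  · left
    refine ⟨hnm, ?_⟩
    by_contra hne
    exact h (next_eq_zero_of_noMatch G pol hw hnm hne)
  · right
    have hex : ∃ a ∈ w, G.Adj a v := by
      by_contra hc
      push_neg at hc
      exact hnm hc
    obtain ⟨k, _, hk2⟩ := pol.matchRule w hw v hex w' h
    exact ⟨hex, k, hk2⟩

lemma next_mem_succs {w : List V} (hw : w ∈ WSpace G) {v : V} {w' : List V}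
    (h : pol.next w v w' ≠ 0) : w' ∈ succs w := by
  rcases next_cases G pol hw h with ⟨_, rfl⟩ | ⟨_, k, rfl⟩
  · exact append_mem_succs w v
  · exact eraseIdx_mem_succs w k k.isLt

lemma wspace_eraseIdx {w : List V} (hw : w ∈ WSpace G) (k : ℕ) :
    w.eraseIdx k ∈ WSpace G := by
  obtain ⟨h1, h2⟩ := hw
  have hsub := List.eraseIdx_sublist w k
  constructor
  · intro i j hij hadj
    rcases h1 i j hij hadj with h | h
    · exact Or.inl (Nat.le_zero.mp (h ▸ hsub.count_le i))
    · exact Or.inr (Nat.le_zero.mp (h ▸ hsub.count_le j))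
  · intro i hi
    exact le_trans (hsub.count_le i) (h2 i hi)

lemma wspace_append {w : List V} (hw : w ∈ WSpace G) {v : V}
    (hnm : NoMatch G w v) : w ++ [v] ∈ WSpace G := by
  obtain ⟨h1, h2⟩ := hw
  constructor
  · intro i j hij hadj
    by_contra hc
    push_neg at hc
    obtain ⟨hci, hcj⟩ := hc
    have hi : i ∈ w ++ [v] := List.count_pos_iff.mp (Nat.pos_of_ne_zero hci)
    have hj : j ∈ w ++ [v] := List.count_pos_iff.mp (Nat.pos_of_ne_zero hcj)
    simp only [List.mem_append, List.mem_singleton] at hi hj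
    rcases hi with hi | rfl
    · rcases hj with hj | rfl
      · rcases h1 i j hij hadj with h | h
        · have := List.count_pos_iff.mpr hi; omega
        · have := List.count_pos_iff.mpr hj; omega
      · exact hnm i hi hadj
    · rcases hj with hj | rfl
      · exact hnm j hj (G.symm _ _ hadj)
      · exact hij rfl
  · intro i hi
    rw [List.count_append]
    rcases eq_or_ne i v with rfl | hne
    · have hz : w.count i = 0 := by
        by_contra h0
        exact hnm i (List.count_pos_iff.mp (Nat.pos_of_ne_zero h0)) hi
      simp [hz]
    · have : List.count i [v] = 0 := by
        simp [List.count_singleton', hne, Ne.symm hne]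
      rw [this]
      simpa using h2 i hi

lemma sum_next_mul {w : List V} (hw : w ∈ WSpace G) (v : V) (g : ℕ → ℝ) :
    ∑ w' ∈ succs w, pol.next w v w' * g w'.length
      = if NoMatch G w v then g (w.length + 1) else g (w.length - 1) := by
  by_cases hnm : NoMatch G w v
  · rw [if_pos hnm]
    rw [Finset.sum_eq_single_of_mem (w ++ [v]) (append_mem_succs w v)]
    · rw [pol.noMatch w hw v hnm, one_mul]
      simp
    · intro w' _ hne
      rw [next_eq_zero_of_noMatch G pol hw hnm hne, zero_mul]
  · rw [if_neg hnm]
    have hlen : ∀ w' ∈ succs w,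
        pol.next w v w' * g w'.length = pol.next w v w' * g (w.length - 1) := by
      intro w' _
      rcases eq_or_ne (pol.next w v w') 0 with h0 | h0
      · rw [h0, zero_mul, zero_mul]
      · rcases next_cases G pol hw h0 with ⟨h, _⟩ | ⟨_, k, rfl⟩
        · exact absurd h hnm
        · rw [List.length_eraseIdx, if_pos k.isLt]
    rw [Finset.sum_congr rfl hlen, ← Finset.sum_mul]
    have hsum : ∑ w' ∈ succs w, pol.next w v w' = 1 := by
      rw [← pol.total w hw v]
      exact (tsum_eq_sum (fun w' hw' => by
        by_contra h0; exact hw' (next_mem_succs G pol hw h0))).symm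
    rw [hsum, one_mul]

variable (μ : V → ℝ)

lemma kernel_nonneg (hμ : ∀ v, 0 ≤ μ v) (w w' : List V) :
    0 ≤ kernel G pol μ w w' :=
  Finset.sum_nonneg fun v _ => mul_nonneg (hμ v) (pol.nonneg w v w')

lemma kernel_eq_zero_of_not_mem_succs {w : List V} (hw : w ∈ WSpace G)
    {w' : List V} (h : w' ∉ succs w) : kernel G pol μ w w' = 0 := by
  apply Finset.sum_eq_zero
  intro v _
  rcases eq_or_ne (pol.next w v w') 0 with h0 | h0
  · rw [h0, mul_zero]
  · exact absurd (next_mem_succs G pol hw h0) h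

lemma kernel_mem_wspace (hμ : ∀ v, 0 < μ v) {w : List V} (hw : w ∈ WSpace G)
    {w' : List V} (h : kernel G pol μ w w' ≠ 0) : w' ∈ WSpace G := by
  unfold kernel at h
  obtain ⟨v, -, hv⟩ := Finset.exists_ne_zero_of_sum_ne_zero h
  have h0 : pol.next w v w' ≠ 0 := fun hz => hv (by rw [hz, mul_zero])
  rcases next_cases G pol hw h0 with ⟨hnm, rfl⟩ | ⟨_, k, rfl⟩
  · exact wspace_append G hw hnm
  · exact wspace_eraseIdx G hw k

lemma sum_kernel_mul {w : List V} (hw : w ∈ WSpace G) (g : ℕ → ℝ) :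
    ∑ w' ∈ succs w, kernel G pol μ w w' * g w'.length
      = ∑ v, μ v * (if NoMatch G w v then g (w.length + 1) else g (w.length - 1)) := by
  unfold kernel
  calc ∑ w' ∈ succs w, (∑ v, μ v * pol.next w v w') * g w'.length
      = ∑ w' ∈ succs w, ∑ v, μ v * (pol.next w v w' * g w'.length) := by
        apply Finset.sum_congr rfl; intro w' _
        rw [Finset.sum_mul]; apply Finset.sum_congr rfl; intro v _; ring
    _ = ∑ v, ∑ w' ∈ succs w, μ v * (pol.next w v w' * g w'.length) :=
        Finset.sum_comm
    _ = ∑ v, μ v * (if NoMatch G w v then g (w.length + 1) else g (w.length - 1)) := by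
        apply Finset.sum_congr rfl; intro v _
        rw [← Finset.mul_sum, sum_next_mul G pol hw v g]

lemma nil_mem_wspace : ([] : List V) ∈ WSpace G := by
  constructor
  · intro i j _ _; left; simp
  · intro i _; simp

lemma wspace_sublist {l w : List V} (hl : l.Sublist w) (hw : w ∈ WSpace G) :
    l ∈ WSpace G := by
  obtain ⟨h1, h2⟩ := hw
  constructor
  · intro i j hij hadj
    rcases h1 i j hij hadj with h | h
    · exact Or.inl (Nat.le_zero.mp (h ▸ hl.count_le i))
    · exact Or.inr (Nat.le_zero.mp (h ▸ hl.count_le j))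
  · intro i hi
    exact le_trans (hl.count_le i) (h2 i hi)

lemma kernel_row_sum (hμsum : ∑ v, μ v = 1) {w : List V} (hw : w ∈ WSpace G) :
    ∑ w' ∈ succs w, kernel G pol μ w w' = 1 := by
  have h := sum_kernel_mul G pol μ hw (fun _ => 1)
  simpa [hμsum] using h

lemma kernel_pos (hμpos : ∀ v, 0 < μ v) {w : List V} {v : V} {w' : List V}
    (h : pol.next w v w' ≠ 0) : 0 < kernel G pol μ w w' := by
  apply Finset.sum_pos'
  · exact fun u _ => mul_nonneg (hμpos u).le (pol.nonneg w u w')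
  · exact ⟨v, Finset.mem_univ v,
      mul_pos (hμpos v) ((pol.nonneg w v w').lt_of_ne (Ne.symm h))⟩

lemma drift_step (hμsum : ∑ v, μ v = 1) {q β : ℝ}
    (hq : ∀ w ∈ WSpace G, w ≠ [] →
      ∑ v ∈ Finset.univ.filter (fun v => NoMatch G w v), μ v ≤ q)
    (hβ : 1 < β) {w : List V} (hw : w ∈ WSpace G) (hne : w ≠ []) :
    ∑ w' ∈ succs w, kernel G pol μ w w' * β ^ w'.length
      ≤ (q * β + (1 - q) / β) * β ^ w.length := by
  rw [sum_kernel_mul G pol μ hw (β ^ ·)]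
  obtain ⟨m, hm⟩ : ∃ m, w.length = m + 1 :=
    ⟨w.length - 1, (Nat.succ_pred_eq_of_pos (List.length_pos_iff.mpr hne)).symm⟩
  have hβ0 : (0:ℝ) < β := lt_trans one_pos hβ
  set U := ∑ v ∈ Finset.univ.filter (fun v => NoMatch G w v), μ v with hU
  have hUq : U ≤ q := hq w hw hne
  have hsplit : ∑ v, μ v * (if NoMatch G w v then β ^ (w.length + 1)
      else β ^ (w.length - 1)) = U * β ^ (m + 2) + (1 - U) * β ^ m := by
    have h1 : ∀ v : V, μ v * (if NoMatch G w v then β ^ (w.length + 1)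
        else β ^ (w.length - 1)) = if NoMatch G w v then μ v * β ^ (m + 2)
        else μ v * β ^ m := by
      intro v
      rw [hm]
      split <;> · norm_num
    rw [Finset.sum_congr rfl fun v _ => h1 v, Finset.sum_ite, ← Finset.sum_mul,
      ← Finset.sum_mul, ← hU]
    have h2 : ∑ v ∈ Finset.univ.filter (fun v => ¬ NoMatch G w v), μ v = 1 - U := by
      have := Finset.sum_filter_add_sum_filter_not Finset.univ
        (fun v => NoMatch G w v) μ
      rw [hμsum] at this
      linarith [this]
    rw [h2]
  rw [hsplit, hm]
  have hpow : β ^ m ≤ β ^ (m + 2) := pow_le_pow_right₀ hβ.le (by omega)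
  have hrhs : (q * β + (1 - q) / β) * β ^ (m + 1)
      = q * β ^ (m + 2) + (1 - q) * β ^ m := by
    have e1 : β ^ (m + 1) = β ^ m * β := pow_succ β m
    have e2 : β ^ (m + 2) = β ^ m * β * β := by
      rw [pow_succ, pow_succ]
    rw [e1, e2]
    field_simp
  rw [hrhs]
  nlinarith [hpow, hUq]

/-- The distribution of the chain at time `n`, started from the empty queue. -/
noncomputable def xchain : ℕ → List V → ℝ
  | 0 => fun w => if w = [] then 1 else 0
  | n+1 => fun w' => ∑' w, xchain n w * kernel G pol μ w w'

lemma xchain_inv (hμpos : ∀ v, 0 < μ v) (hμsum : ∑ v, μ v = 1)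
    {β γ B : ℝ} (hβ : 1 < β) (hγ0 : 0 ≤ γ) (hγβ : γ ≤ β) (hB1 : 1 ≤ B)
    (hB : γ * B + (β - γ) ≤ B)
    (hstep : ∀ w ∈ WSpace G, w ≠ [] →
      ∑ w' ∈ succs w, kernel G pol μ w w' * β ^ w'.length ≤ γ * β ^ w.length)
    (n : ℕ) :
    (∀ w, 0 ≤ xchain G pol μ n w) ∧
    (∀ w, xchain G pol μ n w ≠ 0 → w ∈ WSpace G ∧ w.length ≤ n) ∧
    (∑ w ∈ listsLE V n, xchain G pol μ n w = 1) ∧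
    (∑ w ∈ listsLE V n, xchain G pol μ n w * β ^ w.length ≤ B) := by
  induction n with
  | zero =>
    refine ⟨fun w => by unfold xchain; split <;> norm_num, fun w hw => ?_, ?_, ?_⟩
    · unfold xchain at hw
      split at hw
      · next h => exact ⟨h ▸ nil_mem_wspace G, by simp [h]⟩
      · exact absurd rfl hw
    · rw [Finset.sum_eq_single_of_mem ([] : List V) (mem_listsLE.mpr (by simp))]
      · unfold xchain; simp
      · intro w _ hne
        unfold xchain; simp [hne]
    · rw [Finset.sum_eq_single_of_mem ([] : List V) (mem_listsLE.mpr (by simp))]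
      · unfold xchain; simpa using hB1
      · intro w _ hne
        unfold xchain; simp [hne]
  | succ n ih =>
    obtain ⟨ihnn, ihsupp, ihmass, ihmom⟩ := ih
    have hμ0 : ∀ v, 0 ≤ μ v := fun v => (hμpos v).le
    have hrw : ∀ w', xchain G pol μ (n+1) w'
        = ∑ w ∈ listsLE V n, xchain G pol μ n w * kernel G pol μ w w' := by
      intro w'
      show (∑' w, xchain G pol μ n w * kernel G pol μ w w') = _
      apply tsum_eq_sum
      intro w hwmem
      rcases eq_or_ne (xchain G pol μ n w) 0 with h | h
      · rw [h, zero_mul]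
      · exact absurd (mem_listsLE.mpr (ihsupp w h).2) hwmem
    have hnn : ∀ w, 0 ≤ xchain G pol μ (n+1) w := by
      intro w'
      rw [hrw w']
      exact Finset.sum_nonneg fun w _ =>
        mul_nonneg (ihnn w) (kernel_nonneg G pol μ hμ0 w w')
    have hsupp : ∀ w', xchain G pol μ (n+1) w' ≠ 0 →
        w' ∈ WSpace G ∧ w'.length ≤ n + 1 := by
      intro w' h
      rw [hrw w'] at h
      obtain ⟨w, _, hwne⟩ := Finset.exists_ne_zero_of_sum_ne_zero h
      have hx : xchain G pol μ n w ≠ 0 := fun h0 => hwne (by rw [h0, zero_mul])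
      have hk : kernel G pol μ w w' ≠ 0 := fun h0 => hwne (by rw [h0, mul_zero])
      obtain ⟨hwsp, hwlen⟩ := ihsupp w hx
      have hsucc : w' ∈ succs w := by
        by_contra hc
        exact hk (kernel_eq_zero_of_not_mem_succs G pol μ hwsp hc)
      exact ⟨kernel_mem_wspace G pol μ hμpos hwsp hk,
        le_trans (length_le_of_mem_succs hsucc) (by omega)⟩
    have hsubsucc : ∀ w ∈ listsLE V n, succs w ⊆ listsLE V (n+1) := by
      intro w hwmem w' hw'
      exact mem_listsLE.mpr (le_trans (length_le_of_mem_succs hw')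
        (by have := mem_listsLE.mp hwmem; omega))
    have key : ∀ g : ℕ → ℝ,
        ∑ w' ∈ listsLE V (n+1), xchain G pol μ (n+1) w' * g w'.length
        = ∑ w ∈ listsLE V n, xchain G pol μ n w *
            ∑ w' ∈ listsLE V (n+1), kernel G pol μ w w' * g w'.length := by
      intro g
      calc ∑ w' ∈ listsLE V (n+1), xchain G pol μ (n+1) w' * g w'.length
          = ∑ w' ∈ listsLE V (n+1), ∑ w ∈ listsLE V n,
              xchain G pol μ n w * kernel G pol μ w w' * g w'.length := by
            refine Finset.sum_congr rfl fun w' _ => ?_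
            rw [hrw w', Finset.sum_mul]
        _ = ∑ w ∈ listsLE V n, ∑ w' ∈ listsLE V (n+1),
              xchain G pol μ n w * kernel G pol μ w w' * g w'.length :=
            Finset.sum_comm
        _ = _ := by
            refine Finset.sum_congr rfl fun w _ => ?_
            rw [Finset.mul_sum]
            exact Finset.sum_congr rfl fun w' _ => by ring
    have hinner : ∀ g : ℕ → ℝ, ∀ w ∈ listsLE V n, w ∈ WSpace G →
        ∑ w' ∈ listsLE V (n+1), kernel G pol μ w w' * g w'.length
        = ∑ w' ∈ succs w, kernel G pol μ w w' * g w'.length := by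
      intro g w hwmem hwsp
      exact (Finset.sum_subset (hsubsucc w hwmem) fun w' _ hns => by
        rw [kernel_eq_zero_of_not_mem_succs G pol μ hwsp hns, zero_mul]).symm
    have hmass : ∑ w ∈ listsLE V (n+1), xchain G pol μ (n+1) w = 1 := by
      have h1 := key (fun _ => 1)
      simp only [mul_one] at h1
      rw [h1, ← ihmass]
      refine Finset.sum_congr rfl fun w hwmem => ?_
      rcases eq_or_ne (xchain G pol μ n w) 0 with h | h
      · rw [h, zero_mul]
      · have hwsp := (ihsupp w h).1
        have h2 := hinner (fun _ => 1) w hwmem hwsp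
        simp only [mul_one] at h2
        rw [h2, kernel_row_sum G pol μ hμsum hwsp, mul_one]
    have hmom : ∑ w ∈ listsLE V (n+1),
        xchain G pol μ (n+1) w * β ^ w.length ≤ B := by
      rw [key (β ^ ·)]
      have hle : ∀ w ∈ listsLE V n, xchain G pol μ n w *
          ∑ w' ∈ listsLE V (n+1), kernel G pol μ w w' * β ^ w'.length
          ≤ γ * (xchain G pol μ n w * β ^ w.length)
            + (β - γ) * (if w = [] then xchain G pol μ n w else 0) := by
        intro w hwmem
        rcases eq_or_ne (xchain G pol μ n w) 0 with h | h
        · rw [h]; simp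
        · have hwsp := (ihsupp w h).1
          rw [hinner (β ^ ·) w hwmem hwsp]
          rcases eq_or_ne w [] with rfl | hne
          · have hS : ∑ w' ∈ succs ([] : List V),
                kernel G pol μ [] w' * β ^ w'.length = β := by
              rw [sum_kernel_mul G pol μ (nil_mem_wspace G) (β ^ ·)]
              have hnmv : ∀ v : V, NoMatch G ([] : List V) v :=
                fun v a ha => absurd ha List.not_mem_nil
              have hval : ∀ v : V, (if NoMatch G [] v then (β ^ (List.length ([]:List V) + 1)) else (β ^ (List.length ([]:List V) - 1))) = β := by
                intro v
                rw [if_pos (hnmv v)]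
                simp
              rw [Finset.sum_congr rfl fun v _ => by rw [hval v], ← Finset.sum_mul,
                hμsum, one_mul]
            rw [hS, if_pos rfl]
            simp only [List.length_nil, pow_zero, mul_one]
            have hx0 := ihnn ([] : List V)
            have hq : γ * xchain G pol μ n [] + (β - γ) * xchain G pol μ n []
                = xchain G pol μ n [] * β := by ring
            linarith
          · have hstepw := hstep w hwsp hne
            have hx0 : 0 ≤ xchain G pol μ n w := ihnn w
            calc xchain G pol μ n w *
                ∑ w' ∈ succs w, kernel G pol μ w w' * β ^ w'.length
                ≤ xchain G pol μ n w * (γ * β ^ w.length) :=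
                  mul_le_mul_of_nonneg_left hstepw hx0
              _ = γ * (xchain G pol μ n w * β ^ w.length) := by ring
              _ ≤ _ := by
                  rw [if_neg hne, mul_zero]
                  simp
      calc ∑ w ∈ listsLE V n, xchain G pol μ n w *
            ∑ w' ∈ listsLE V (n+1), kernel G pol μ w w' * β ^ w'.length
          ≤ ∑ w ∈ listsLE V n, (γ * (xchain G pol μ n w * β ^ w.length)
            + (β - γ) * (if w = [] then xchain G pol μ n w else 0)) :=
            Finset.sum_le_sum hle
        _ = γ * (∑ w ∈ listsLE V n, xchain G pol μ n w * β ^ w.length)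
            + (β - γ) * ∑ w ∈ listsLE V n,
                (if w = [] then xchain G pol μ n w else 0) := by
            rw [Finset.sum_add_distrib, ← Finset.mul_sum, ← Finset.mul_sum]
        _ ≤ γ * B + (β - γ) * 1 := by
            have h1 : ∑ w ∈ listsLE V n,
                (if w = [] then xchain G pol μ n w else 0) = xchain G pol μ n [] := by
              rw [Finset.sum_ite_eq' (listsLE V n) ([] : List V)]
              rw [if_pos (mem_listsLE.mpr (by simp))]
            have h2 : xchain G pol μ n [] ≤ 1 := by
              rw [← ihmass]
              exact Finset.single_le_sum (fun w _ => ihnn w)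
                (mem_listsLE.mpr (by simp))
            rw [h1]
            have hβγ : 0 ≤ β - γ := by linarith
            exact add_le_add (mul_le_mul_of_nonneg_left ihmom hγ0)
              (mul_le_mul_of_nonneg_left h2 hβγ)
        _ ≤ B := by linarith
    exact ⟨hnn, hsupp, hmass, hmom⟩

lemma reach_nil (hμpos : ∀ v, 0 < μ v) (hnb : ∀ a : V, ∃ v : V, G.Adj a v)
    {w : List V} (hw : w ∈ WSpace G) :
    Relation.ReflTransGen (fun a b => 0 < kernel G pol μ a b) w [] := by
  obtain ⟨n, hn⟩ : ∃ n, w.length = n := ⟨_, rfl⟩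
  induction n generalizing w with
  | zero =>
    rw [List.length_eq_zero_iff] at hn
    subst hn
    exact Relation.ReflTransGen.refl
  | succ n ih =>
    have hne : w ≠ [] := by
      intro h; subst h; simp at hn
    obtain ⟨a, ha⟩ := List.exists_mem_of_ne_nil w hne
    obtain ⟨v, hv⟩ := hnb a
    have hex : ∃ a ∈ w, G.Adj a v := ⟨a, ha, hv⟩
    obtain ⟨w'', hw''⟩ : ∃ w'', pol.next w v w'' ≠ 0 := by
      by_contra hc
      push_neg at hc
      have h0 : (∑' u, pol.next w v u) = 0 := by
        simp only [hc]; exact tsum_zero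
      rw [pol.total w hw v] at h0
      norm_num at h0
    obtain ⟨k, -, hk⟩ := pol.matchRule w hw v hex w'' hw''
    subst hk
    have hlen' : (w.eraseIdx ↑k).length = n := by
      rw [List.length_eraseIdx, if_pos k.isLt]
      omega
    exact Relation.ReflTransGen.head (kernel_pos G pol μ hμpos hw'')
      (ih (wspace_eraseIdx G hw ↑k) hlen')

lemma reach_from_nil (hμpos : ∀ v, 0 < μ v) {w' : List V} (hw' : w' ∈ WSpace G) :
    Relation.ReflTransGen (fun a b => 0 < kernel G pol μ a b) [] w' := by
  have main : ∀ i, i ≤ w'.length →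
      Relation.ReflTransGen (fun a b => 0 < kernel G pol μ a b) [] (w'.take i) := by
    intro i
    induction i with
    | zero => intro _; simpa using Relation.ReflTransGen.refl
    | succ i ih =>
      intro hi
      have hi' : i < w'.length := hi
      have htk : w'.take i ∈ WSpace G :=
        wspace_sublist G (List.take_sublist i w') hw'
      obtain ⟨v, hv⟩ : ∃ v, w'[i] = v := ⟨_, rfl⟩
      have hvmem : v ∈ w' := hv ▸ List.getElem_mem hi'
      have hnm : NoMatch G (w'.take i) v := by
        intro a haMem hadj
        have haw : a ∈ w' := (List.take_sublist i w').subset haMem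
        rcases eq_or_ne a v with heq | hne
        · subst heq
          have hc := hw'.2 a hadj
          have hsplit : w'.count a = (w'.take i).count a + (w'.drop i).count a := by
            rw [← List.count_append, List.take_append_drop]
          have h1 : 0 < (w'.take i).count a := List.count_pos_iff.mpr haMem
          have hdrop : w'.drop i = a :: w'.drop (i+1) := by
            rw [← List.getElem_cons_drop hi', hv]
          have h2 : 0 < (w'.drop i).count a := by
            rw [hdrop]
            simp [List.count_cons]
          omega
        · have hc := hw'.1 a v hne hadj
          have h1 : 0 < w'.count a := List.count_pos_iff.mpr haw
          have h2 : 0 < w'.count v := List.count_pos_iff.mpr hvmem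
          rcases hc with h | h <;> omega
      have h2 : w'.take (i+1) = w'.take i ++ [v] := by
        rw [List.take_succ]
        congr 1
        rw [List.getElem?_eq_getElem hi', hv]
        rfl
      have h1 : pol.next (w'.take i) v (w'.take i ++ [v]) = 1 :=
        pol.noMatch _ htk v hnm
      have hstep : 0 < kernel G pol μ (w'.take i) (w'.take (i+1)) := by
        rw [h2]
        exact kernel_pos G pol μ hμpos (by rw [h1]; norm_num)
      exact Relation.ReflTransGen.tail (ih (le_of_lt hi')) hstep
  simpa using main w'.length le_rfl

lemma length_ge_of_mem_succs {w w' : List V} (h : w' ∈ succs w) :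
    w.length ≤ w'.length + 1 := by
  simp only [succs, Finset.mem_union, Finset.mem_image, Finset.mem_univ, true_and,
    Finset.mem_range] at h
  rcases h with ⟨v, rfl⟩ | ⟨k, hk, rfl⟩
  · simp
    omega
  · rw [List.length_eraseIdx]
    split <;> omega

/-- All analytic hypotheses bundled together. -/
structure Setup (G : Multigraph V) (pol : Policy G) (μ : V → ℝ) (β γ B : ℝ) :
    Prop where
  hμpos : ∀ v, 0 < μ v
  hμsum : ∑ v, μ v = 1
  hβ : 1 < β
  hγ0 : 0 ≤ γ
  hγβ : γ ≤ β
  hB1 : 1 ≤ B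
  hB : γ * B + (β - γ) ≤ B
  hstep : ∀ w ∈ WSpace G, w ≠ [] →
      ∑ w' ∈ succs w, kernel G pol μ w w' * β ^ w'.length ≤ γ * β ^ w.length

variable {β γ B : ℝ}

lemma Setup.master (h : Setup G pol μ β γ B) (n : ℕ) :
    (∀ w, 0 ≤ xchain G pol μ n w) ∧
    (∀ w, xchain G pol μ n w ≠ 0 → w ∈ WSpace G ∧ w.length ≤ n) ∧
    (∑ w ∈ listsLE V n, xchain G pol μ n w = 1) ∧
    (∑ w ∈ listsLE V n, xchain G pol μ n w * β ^ w.length ≤ B) :=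
  xchain_inv G pol μ h.hμpos h.hμsum h.hβ h.hγ0 h.hγβ h.hB1 h.hB h.hstep n

lemma Setup.xnonneg (h : Setup G pol μ β γ B) (n : ℕ) (w : List V) :
    0 ≤ xchain G pol μ n w := (Setup.master G pol μ h n).1 w

lemma Setup.xzero (h : Setup G pol μ β γ B) {n : ℕ} {w : List V}
    (hw : w ∉ WSpace G) : xchain G pol μ n w = 0 := by
  by_contra hc
  exact hw ((Setup.master G pol μ h n).2.1 w hc).1

lemma Setup.xzero' (h : Setup G pol μ β γ B) {n : ℕ} {w : List V}
    (hw : w ∉ listsLE V n) : xchain G pol μ n w = 0 := by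
  by_contra hc
  exact hw (mem_listsLE.mpr ((Setup.master G pol μ h n).2.1 w hc).2)

lemma Setup.xsum_le (h : Setup G pol μ β γ B) (n : ℕ) (F : Finset (List V)) :
    ∑ w ∈ F, xchain G pol μ n w ≤ 1 := by
  calc ∑ w ∈ F, xchain G pol μ n w
      ≤ ∑ w ∈ F ∪ listsLE V n, xchain G pol μ n w :=
        Finset.sum_le_sum_of_subset_of_nonneg Finset.subset_union_left
          (fun w _ _ => Setup.xnonneg G pol μ h n w)
    _ = ∑ w ∈ listsLE V n, xchain G pol μ n w :=
        (Finset.sum_subset Finset.subset_union_right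
          (fun w _ hnw => Setup.xzero' G pol μ h hnw)).symm
    _ = 1 := (Setup.master G pol μ h n).2.2.1

lemma Setup.xle_one (h : Setup G pol μ β γ B) (n : ℕ) (w : List V) :
    xchain G pol μ n w ≤ 1 := by
  have := Setup.xsum_le G pol μ h n {w}
  simpa using this

lemma Setup.xmom_le (h : Setup G pol μ β γ B) (n : ℕ) (F : Finset (List V)) :
    ∑ w ∈ F, xchain G pol μ n w * β ^ w.length ≤ B := by
  have hβ0 : (0:ℝ) < β := lt_trans one_pos h.hβ
  calc ∑ w ∈ F, xchain G pol μ n w * β ^ w.length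
      ≤ ∑ w ∈ F ∪ listsLE V n, xchain G pol μ n w * β ^ w.length :=
        Finset.sum_le_sum_of_subset_of_nonneg Finset.subset_union_left
          (fun w _ _ => mul_nonneg (Setup.xnonneg G pol μ h n w) (pow_nonneg hβ0.le _))
    _ = ∑ w ∈ listsLE V n, xchain G pol μ n w * β ^ w.length :=
        (Finset.sum_subset Finset.subset_union_right
          (fun w _ hnw => by rw [Setup.xzero' G pol μ h hnw, zero_mul])).symm
    _ ≤ B := (Setup.master G pol μ h n).2.2.2

lemma Setup.xhead (h : Setup G pol μ β γ B) (n L : ℕ) :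
    1 - B / β ^ (L+1) ≤ ∑ w ∈ listsLE V L, xchain G pol μ n w := by
  have hβ0 : (0:ℝ) < β := lt_trans one_pos h.hβ
  have hp0 : (0:ℝ) < β ^ (L+1) := pow_pos hβ0 _
  set N := max n L with hN
  have hsubL : listsLE V L ⊆ listsLE V N :=
    fun w hw => mem_listsLE.mpr (le_trans (mem_listsLE.mp hw) (le_max_right n L))
  have hmassN : ∑ w ∈ listsLE V N, xchain G pol μ n w = 1 := by
    rw [← (Setup.master G pol μ h n).2.2.1]
    exact (Finset.sum_subset (fun w hw => mem_listsLE.mpr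
      (le_trans (mem_listsLE.mp hw) (le_max_left n L)))
      (fun w _ hnw => Setup.xzero' G pol μ h hnw)).symm
  have hsplit := Finset.sum_sdiff (f := fun w => xchain G pol μ n w) hsubL
  have htail : ∑ w ∈ listsLE V N \ listsLE V L, xchain G pol μ n w
      ≤ B / β ^ (L+1) := by
    have hterm : ∀ w ∈ listsLE V N \ listsLE V L,
        xchain G pol μ n w ≤ xchain G pol μ n w * β ^ w.length / β ^ (L+1) := by
      intro w hw
      have hlen : L + 1 ≤ w.length := by
        have := Finset.mem_sdiff.mp hw
        have h2 := this.2
        rw [mem_listsLE] at h2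
        omega
      rw [le_div_iff₀ hp0]
      exact mul_le_mul_of_nonneg_left (pow_le_pow_right₀ h.hβ.le hlen)
        (Setup.xnonneg G pol μ h n w)
    calc ∑ w ∈ listsLE V N \ listsLE V L, xchain G pol μ n w
        ≤ ∑ w ∈ listsLE V N \ listsLE V L,
            xchain G pol μ n w * β ^ w.length / β ^ (L+1) :=
          Finset.sum_le_sum hterm
      _ = (∑ w ∈ listsLE V N \ listsLE V L,
            xchain G pol μ n w * β ^ w.length) / β ^ (L+1) :=
          (Finset.sum_div _ _ _).symm
      _ ≤ B / β ^ (L+1) := (div_le_div_iff_of_pos_right hp0).mpr (Setup.xmom_le G pol μ h n _)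
  linarith

/-- The Cesàro averages of the chain distributions. -/
noncomputable def ces (n : ℕ) (w : List V) : ℝ :=
  (∑ m ∈ Finset.range (n+1), xchain G pol μ m w) / ((n:ℝ)+1)

lemma Setup.xrec (h : Setup G pol μ β γ B) (n : ℕ) (w' : List V) :
    xchain G pol μ (n+1) w'
      = ∑ w ∈ listsLE V (w'.length + 1), xchain G pol μ n w * kernel G pol μ w w' := by
  show (∑' w, xchain G pol μ n w * kernel G pol μ w w') = _
  apply tsum_eq_sum
  intro w hwmem
  rcases eq_or_ne (xchain G pol μ n w) 0 with h0 | h0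
  · rw [h0, zero_mul]
  · have hwsp := ((Setup.master G pol μ h n).2.1 w h0).1
    rcases eq_or_ne (kernel G pol μ w w') 0 with hk | hk
    · rw [hk, mul_zero]
    · exfalso
      have hsucc : w' ∈ succs w := by
        by_contra hc
        exact hk (kernel_eq_zero_of_not_mem_succs G pol μ hwsp hc)
      exact hwmem (mem_listsLE.mpr (length_ge_of_mem_succs hsucc))

lemma Setup.ces_rec (h : Setup G pol μ β γ B) (n : ℕ) (w' : List V) :
    ∑ w ∈ listsLE V (w'.length + 1), ces G pol μ n w * kernel G pol μ w w'
      = ces G pol μ n w'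
        + (xchain G pol μ (n+1) w' - xchain G pol μ 0 w') / ((n:ℝ)+1) := by
  have hn0 : ((n:ℝ)+1) ≠ 0 := by positivity
  have lhs : ∑ w ∈ listsLE V (w'.length + 1), ces G pol μ n w * kernel G pol μ w w'
      = (∑ m ∈ Finset.range (n+1), xchain G pol μ (m+1) w') / ((n:ℝ)+1) := by
    unfold ces
    rw [Finset.sum_congr rfl (fun w _ => by
      rw [div_mul_eq_mul_div, Finset.sum_mul])]
    rw [← Finset.sum_div]
    congr 1
    rw [Finset.sum_comm]
    exact Finset.sum_congr rfl fun m _ => (Setup.xrec G pol μ h m w').symm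
  rw [lhs]
  have hnum : ∑ m ∈ Finset.range (n+1), xchain G pol μ (m+1) w'
      = ∑ m ∈ Finset.range (n+1), xchain G pol μ m w'
        + xchain G pol μ (n+1) w' - xchain G pol μ 0 w' := by
    have e1 := Finset.sum_range_succ' (fun m => xchain G pol μ m w') (n+1)
    have e2 := Finset.sum_range_succ (fun m => xchain G pol μ m w') (n+1)
    linarith
  rw [hnum]
  unfold ces
  field_simp
  ring

lemma Setup.ces_nonneg (h : Setup G pol μ β γ B) (n : ℕ) (w : List V) :
    0 ≤ ces G pol μ n w :=
  div_nonneg (Finset.sum_nonneg fun m _ => Setup.xnonneg G pol μ h m w) (by positivity)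

lemma Setup.ces_zero (h : Setup G pol μ β γ B) {w : List V} (hw : w ∉ WSpace G)
    (n : ℕ) : ces G pol μ n w = 0 := by
  unfold ces
  rw [Finset.sum_eq_zero fun m _ => Setup.xzero G pol μ h hw, zero_div]

lemma Setup.ces_sum_le (h : Setup G pol μ β γ B) (n : ℕ) (F : Finset (List V)) :
    ∑ w ∈ F, ces G pol μ n w ≤ 1 := by
  have hn0 : (0:ℝ) < (n:ℝ)+1 := by positivity
  unfold ces
  rw [← Finset.sum_div, div_le_one hn0, Finset.sum_comm]
  calc ∑ m ∈ Finset.range (n+1), ∑ w ∈ F, xchain G pol μ m w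
      ≤ ∑ _m ∈ Finset.range (n+1), (1:ℝ) :=
        Finset.sum_le_sum fun m _ => Setup.xsum_le G pol μ h m F
    _ = (n:ℝ)+1 := by simp
    _ ≤ (n:ℝ)+1 := le_rfl

lemma Setup.ces_le_one (h : Setup G pol μ β γ B) (n : ℕ) (w : List V) :
    ces G pol μ n w ≤ 1 := by
  have := Setup.ces_sum_le G pol μ h n {w}
  simpa using this

lemma Setup.ces_head (h : Setup G pol μ β γ B) (n L : ℕ) :
    1 - B / β ^ (L+1) ≤ ∑ w ∈ listsLE V L, ces G pol μ n w := by
  have hn0 : (0:ℝ) < (n:ℝ)+1 := by positivity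
  unfold ces
  rw [← Finset.sum_div, le_div_iff₀ hn0, Finset.sum_comm]
  calc (1 - B / β ^ (L+1)) * ((n:ℝ)+1)
      = ∑ _m ∈ Finset.range (n+1), (1 - B / β ^ (L+1)) := by simp; ring
    _ ≤ ∑ m ∈ Finset.range (n+1), ∑ w ∈ listsLE V L, xchain G pol μ m w :=
        Finset.sum_le_sum fun m _ => Setup.xhead G pol μ h m L

end StabProofAux

open StabProofAux in
/-- Let `G` be a complete `p`-partite multigraph with `p ≥ 3`. Then
`Ncond(Ǧ) ⊆ stab(G,Φ)` for every admissible matching policy `Φ`: for every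
`μ ∈ Ncond(Ǧ)`, the chain of the model `(G,Φ,μ)` is positive recurrent. -/
theorem ncond_check_subset_stab {V : Type*} [Fintype V] [DecidableEq V]
    (G : Multigraph V) (p : ℕ) (hp : 3 ≤ p) (hpart : CompletePPartite G p)
    (pol : Policy G) (μ : V → ℝ) (hμ : Ncond (check G) μ) :
    PositiveRecurrent G (kernel G pol μ) := by
  classical
  obtain ⟨f, hfsurj, hadj⟩ := hpart
  obtain ⟨⟨hμpos, hμsum⟩, hncond⟩ := hμ
  have hμ0 : ∀ v, 0 ≤ μ v := fun v => (hμpos v).le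
  have hpne : (Finset.univ : Finset (Fin p)).Nonempty :=
    ⟨⟨0, by omega⟩, Finset.mem_univ _⟩
  -- mass of a set as a finite sum
  have hmass_eq : ∀ P : V → Prop, mass μ {v | P v}
      = ∑ v ∈ Finset.univ.filter P, μ v := by
    intro P
    unfold mass
    rw [Finset.sum_filter]
    refine Finset.sum_congr rfl fun v _ => ?_
    rw [Set.indicator_apply]
    simp only [Set.mem_setOf_eq]
  have hmass_split : ∀ k : Fin p,
      mass μ {v | f v = k} + mass μ {v | ¬ f v = k} = 1 := by
    intro k
    unfold mass
    rw [← Finset.sum_add_distrib, ← hμsum]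
    refine Finset.sum_congr rfl fun v _ => ?_
    rw [Set.indicator_apply, Set.indicator_apply]
    simp only [Set.mem_setOf_eq]
    by_cases hv : f v = k
    · rw [if_pos hv, if_neg (not_not_intro hv)]
      ring
    · rw [if_neg hv, if_pos hv]
      ring
  -- each part has mass < 1/2
  have hpm_lt : ∀ k : Fin p, mass μ {v | f v = k} < 1/2 := by
    intro k
    obtain ⟨v0, hv0⟩ := hfsurj k
    have hindep : (check G).IsIndep {v | f v = k} := by
      refine ⟨⟨v0, hv0⟩, ?_⟩
      intro i hi j hj hadj'
      exact (hadj i j).mp hadj' (hi.trans hj.symm)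
    have hnb : (check G).nbhd {v | f v = k} = {v | ¬ f v = k} := by
      ext v
      constructor
      · rintro ⟨u, hu, huv⟩
        have hne := (hadj u v).mp huv
        simp only [Set.mem_setOf_eq] at hu ⊢
        intro hvk
        exact hne (hu.trans hvk.symm)
      · intro hv
        simp only [Set.mem_setOf_eq] at hv
        exact ⟨v0, hv0, (hadj v0 v).mpr (by rw [hv0]; exact fun hh => hv hh.symm)⟩
    have hlt := hncond _ hindep
    rw [hnb] at hlt
    have hsp := hmass_split k
    linarith
  -- the maximal part mass q
  set q := Finset.univ.sup' hpne (fun k : Fin p => mass μ {v | f v = k})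
    with hqdef
  have hqk : ∀ k : Fin p, mass μ {v | f v = k} ≤ q :=
    fun k => Finset.le_sup' (fun k : Fin p => mass μ {v | f v = k})
      (Finset.mem_univ k)
  have hq2 : q < 1/2 := (Finset.sup'_lt_iff hpne).mpr fun k _ => hpm_lt k
  have hq0 : 0 < q := by
    have k0 : Fin p := ⟨0, by omega⟩
    refine lt_of_lt_of_le ?_ (hqk k0)
    obtain ⟨v0, hv0⟩ := hfsurj k0
    unfold mass
    have hle : μ v0 ≤ ∑ v, ({v | f v = k0} : Set V).indicator μ v := by
      have := Finset.single_le_sum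
        (f := fun v => ({v | f v = k0} : Set V).indicator μ v)
        (fun v _ => Set.indicator_nonneg (fun u _ => hμ0 u) v)
        (Finset.mem_univ v0)
      calc μ v0 = ({v | f v = k0} : Set V).indicator μ v0 :=
            (Set.indicator_of_mem (show v0 ∈ {v | f v = k0} from hv0) μ).symm
        _ ≤ _ := this
    exact lt_of_lt_of_le (hμpos v0) hle
  -- the constants
  set β := 1/(2*q) with hβdef
  have h2q0 : (0:ℝ) < 2*q := by linarith
  have hβpos : 0 < β := by rw [hβdef]; positivity
  have hβ : 1 < β := by
    rw [hβdef, lt_div_iff₀ h2q0]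
    linarith
  set γ := q*β + (1-q)/β with hγdef
  have hγ0 : 0 ≤ γ := by
    rw [hγdef]
    have h1 : 0 ≤ q*β := mul_nonneg hq0.le hβpos.le
    have h2 : 0 ≤ (1-q)/β := div_nonneg (by linarith) hβpos.le
    linarith
  have hγ1 : γ < 1 := by
    have hγeq : γ = 1/2 + 2*q*(1-q) := by
      rw [hγdef, hβdef]
      field_simp
    rw [hγeq]
    nlinarith [mul_pos (show (0:ℝ) < 1-2*q by linarith)
      (show (0:ℝ) < 1-2*q by linarith)]
  have hγβ : γ ≤ β := by
    have h1 : (1-q)/β ≤ (1-q)*β := by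
      rw [div_le_iff₀ hβpos]
      have hββ : 1 ≤ β*β := by nlinarith
      have h2 := mul_le_mul_of_nonneg_left hββ (show (0:ℝ) ≤ 1-q by linarith)
      linarith
    rw [hγdef]
    nlinarith
  set B := (β-γ)/(1-γ) with hBdef
  have h1γ : (0:ℝ) < 1-γ := by linarith
  have hB1 : 1 ≤ B := by
    rw [hBdef, le_div_iff₀ h1γ]
    linarith
  have hBid : B*(1-γ) = β-γ := by
    rw [hBdef]
    exact div_mul_cancel₀ _ h1γ.ne'
  have hB : γ*B + (β-γ) ≤ B := by nlinarith [hBid]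
  -- the drift hypothesis
  have hqW : ∀ w ∈ WSpace G, w ≠ [] →
      ∑ v ∈ Finset.univ.filter (fun v => NoMatch G w v), μ v ≤ q := by
    intro w hw hne
    obtain ⟨a, ha⟩ := List.exists_mem_of_ne_nil w hne
    have hstep1 : ∑ v ∈ Finset.univ.filter (fun v => NoMatch G w v), μ v
        ≤ mass μ {v | f v = f a} := by
      rw [hmass_eq]
      refine Finset.sum_le_sum_of_subset_of_nonneg ?_ (fun v _ _ => hμ0 v)
      intro v hv
      simp only [Finset.mem_filter, Finset.mem_univ, true_and] at hv ⊢
      by_contra hfv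
      have hchk : (check G).Adj a v := (hadj a v).mpr (fun hh => hfv hh.symm)
      exact hv a ha hchk.1
    exact le_trans hstep1 (hqk (f a))
  have S : Setup G pol μ β γ B :=
    ⟨hμpos, hμsum, hβ, hγ0, hγβ, hB1, hB, by
      intro w hw hne
      rw [hγdef]
      exact drift_step G pol μ hμsum hqW hβ hw hne⟩
  -- the limit measure along an ultrafilter
  have hTop : (Filter.atTop : Filter ℕ).NeBot := Filter.atTop_neBot
  set U : Ultrafilter ℕ := Ultrafilter.of Filter.atTop with hUdef
  have hUle : (U : Filter ℕ) ≤ Filter.atTop := Ultrafilter.of_le _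
  have hex : ∀ w : List V, ∃ c,
      Filter.Tendsto (fun n => ces G pol μ n w) (U : Filter ℕ) (nhds c) := by
    intro w
    have hmem : ∀ n, ces G pol μ n w ∈ Set.Icc (0:ℝ) 1 :=
      fun n => ⟨Setup.ces_nonneg G pol μ S n w, Setup.ces_le_one G pol μ S n w⟩
    have hle : (↑(U.map (fun n => ces G pol μ n w)) : Filter ℝ)
        ≤ Filter.principal (Set.Icc 0 1) := by
      rw [Ultrafilter.coe_map]
      exact Filter.le_principal_iff.mpr
        (Filter.mem_map.mpr (Filter.univ_mem' hmem))
    obtain ⟨c, -, hc⟩ := isCompact_Icc.ultrafilter_le_nhds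
      (U.map (fun n => ces G pol μ n w)) hle
    rw [Ultrafilter.coe_map] at hc
    exact ⟨c, hc⟩
  choose π hπ using hex
  have hπ_nonneg : ∀ w, 0 ≤ π w :=
    fun w => ge_of_tendsto' (hπ w) (fun n => Setup.ces_nonneg G pol μ S n w)
  have hπ_zero : ∀ w ∉ WSpace G, π w = 0 := by
    intro w hw
    have hzero : (fun n => ces G pol μ n w) = fun _ => (0:ℝ) :=
      funext fun n => Setup.ces_zero G pol μ S hw n
    have hc := hπ w
    rw [hzero] at hc
    exact tendsto_nhds_unique hc tendsto_const_nhds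
  have hπF : ∀ F : Finset (List V),
      Filter.Tendsto (fun n => ∑ w ∈ F, ces G pol μ n w) (U : Filter ℕ)
        (nhds (∑ w ∈ F, π w)) :=
    fun F => tendsto_finset_sum F (fun w _ => hπ w)
  have hπ_sum_le : ∀ F : Finset (List V), ∑ w ∈ F, π w ≤ 1 :=
    fun F => le_of_tendsto' (hπF F) (fun n => Setup.ces_sum_le G pol μ S n F)
  have hπ_head : ∀ L : ℕ, 1 - B / β^(L+1) ≤ ∑ w ∈ listsLE V L, π w :=
    fun L => ge_of_tendsto' (hπF _) (fun n => Setup.ces_head G pol μ S n L)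
  have hsummable : Summable π :=
    summable_of_sum_le (Pi.le_def.mpr hπ_nonneg) hπ_sum_le
  have htsum_le : (∑' w, π w) ≤ 1 := hsummable.tsum_le_of_sum_le hπ_sum_le
  have htsum_ge : 1 ≤ ∑' w, π w := by
    have h0 : Filter.Tendsto (fun L : ℕ => B / β^(L+1)) Filter.atTop (nhds 0) := by
      have hinv0 : (0:ℝ) ≤ β⁻¹ := inv_nonneg.mpr hβpos.le
      have hinv1 : β⁻¹ < 1 := inv_lt_one_of_one_lt₀ hβ
      have h1 : Filter.Tendsto (fun L : ℕ => (β⁻¹)^L) Filter.atTop (nhds 0) :=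
        tendsto_pow_atTop_nhds_zero_of_lt_one hinv0 hinv1
      have h2 := (h1.comp (Filter.tendsto_add_atTop_nat 1)).const_mul B
      rw [mul_zero] at h2
      refine h2.congr fun L => ?_
      simp only [Function.comp_apply]
      rw [div_eq_mul_inv, inv_pow]
    have hlim : Filter.Tendsto (fun L : ℕ => 1 - B / β^(L+1)) Filter.atTop
        (nhds 1) := by
      have := h0.const_sub 1
      rw [sub_zero] at this
      exact this
    refine le_of_tendsto' hlim fun L => ?_
    calc 1 - B / β^(L+1) ≤ ∑ w ∈ listsLE V L, π w := hπ_head L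
      _ ≤ ∑' w, π w := hsummable.sum_le_tsum _ (fun w _ => hπ_nonneg w)
  have htsum : (∑' w, π w) = 1 := le_antisymm htsum_le htsum_ge
  -- the stationarity equation
  have hbal : ∀ w' : List V, (∑' w, π w * kernel G pol μ w w') = π w' := by
    intro w'
    have hzero : ∀ w ∉ listsLE V (w'.length + 1),
        π w * kernel G pol μ w w' = 0 := by
      intro w hwP
      rcases eq_or_ne (π w) 0 with h0 | h0
      · rw [h0, zero_mul]
      · have hwsp : w ∈ WSpace G := by
          by_contra hc
          exact h0 (hπ_zero w hc)
        rcases eq_or_ne (kernel G pol μ w w') 0 with hk | hk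
        · rw [hk, mul_zero]
        · exfalso
          have hsucc : w' ∈ succs w := by
            by_contra hc
            exact hk (kernel_eq_zero_of_not_mem_succs G pol μ hwsp hc)
          exact hwP (mem_listsLE.mpr (length_ge_of_mem_succs hsucc))
    rw [tsum_eq_sum hzero]
    have hlim1 : Filter.Tendsto
        (fun n => ∑ w ∈ listsLE V (w'.length + 1),
          ces G pol μ n w * kernel G pol μ w w') (U : Filter ℕ)
        (nhds (∑ w ∈ listsLE V (w'.length + 1), π w * kernel G pol μ w w')) :=
      tendsto_finset_sum _ (fun w _ => (hπ w).mul_const _)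
    have herr : Filter.Tendsto
        (fun n => (xchain G pol μ (n+1) w' - xchain G pol μ 0 w') / ((n:ℝ)+1))
        Filter.atTop (nhds 0) := by
      apply squeeze_zero_norm (a := fun n : ℕ => 2/((n:ℝ)+1))
      · intro n
        have hn1 : (0:ℝ) < (n:ℝ)+1 := by positivity
        rw [Real.norm_eq_abs, abs_div, abs_of_pos hn1]
        have hnum : |xchain G pol μ (n+1) w' - xchain G pol μ 0 w'| ≤ 2 := by
          have h1 := Setup.xnonneg G pol μ S (n+1) w'
          have h2 := Setup.xle_one G pol μ S (n+1) w'
          have h3 := Setup.xnonneg G pol μ S 0 w'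
          have h4 := Setup.xle_one G pol μ S 0 w'
          rw [abs_le]
          constructor <;> linarith
        exact (div_le_div_iff_of_pos_right hn1).mpr hnum
      · have h := tendsto_const_div_atTop_nhds_zero_nat (2:ℝ)
        have h2 := h.comp (Filter.tendsto_add_atTop_nat 1)
        refine h2.congr fun n => ?_
        simp only [Function.comp_apply]
        push_cast
        ring
    have hlim2 : Filter.Tendsto
        (fun n => ∑ w ∈ listsLE V (w'.length + 1),
          ces G pol μ n w * kernel G pol μ w w') (U : Filter ℕ)
        (nhds (π w')) := by
      have hadd := (hπ w').add (herr.mono_left hUle)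
      rw [add_zero] at hadd
      exact hadd.congr fun n => (Setup.ces_rec G pol μ S n w').symm
    exact tendsto_nhds_unique hlim1 hlim2
  -- irreducibility
  have hnb : ∀ a : V, ∃ v : V, G.Adj a v := by
    intro a
    have hcard : 1 < Fintype.card (Fin p) := by
      rw [Fintype.card_fin]
      omega
    obtain ⟨k, hk⟩ := Fintype.exists_ne_of_one_lt_card hcard (f a)
    obtain ⟨v, hv⟩ := hfsurj k
    have hchk : (check G).Adj a v :=
      (hadj a v).mpr (by rw [hv]; exact fun hh => hk hh.symm)
    exact ⟨v, hchk.1⟩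
  refine ⟨?_, π, hπ_nonneg, hπ_zero, htsum, hbal⟩
  intro w hw w' hw'
  exact (reach_nil G pol μ hμpos hnb hw).trans (reach_from_nil G pol μ hμpos hw')
end

section
/- Let G=(V,E) be a connected multigraph, μ a fully supported probability measure on V, and w=w₁…w_q a nonempty word of 𝕎. Then the set of words 𝐰∈𝔹 whose restriction to its letters in V equals w is exactly w₁𝒜₁*w₂𝒜₂*⋯w_q𝒜_q*, where 𝒜_i={ā : a∈V∖E({w₁,…,w_i})}⊆V̄, and its ν-measure equals ∏_{i=1}^{q} μ(w_i)/μ(E({w₁,…,w_i})). -/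
open scoped BigOperators

attribute [local instance] Classical.propDecidable

namespace Multigraph

variable {V : Type*}

section Nu

variable [Fintype V] [DecidableEq V]

/-- The measure `ν` on words over `𝐕 = V ∪ V̄`, the copy `ā` of a letter `a ∈ V`
being encoded as `Sum.inr a`: `ν(𝐰) = ∏_i μ(i)^{|𝐰|_i + |𝐰|_{ī}}`. -/
noncomputable def nu (μ : V → ℝ) (w : List (V ⊕ V)) : ℝ :=
  ∏ i : V, μ i ^ (w.count (Sum.inl i) + w.count (Sum.inr i))

/-- `ν(S)` for a set `S` of words over `𝐕`. -/
noncomputable def nuSet (μ : V → ℝ) (S : Set (List (V ⊕ V))) : ℝ :=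
  ∑' w : S, nu μ (w : List (V ⊕ V))

end Nu
/-- The admissibility condition characterizing the states of the backward detailed
chain: the first letter is non-barred, no two non-barred letters are adjacent, and no
non-barred letter is adjacent to (the original class of) a later barred letter. -/
def BAdmissible (G : Multigraph V) (b : List (V ⊕ V)) : Prop :=
  (∀ h : b ≠ [], ∃ x : V, b.head h = Sum.inl x) ∧
  ∀ i j : Fin b.length, i < j → ∀ x : V, b.get i = Sum.inl x →
    (∀ y : V, b.get j = Sum.inl y → ¬ G.Adj x y) ∧
    ∀ a : V, b.get j = Sum.inr a → ¬ G.Adj x a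

/-- The set `𝔹` of admissible states of the backward detailed chain. -/
def BSet (G : Multigraph V) : Set (List (V ⊕ V)) := {b | BAdmissible G b}
end Multigraph

open Multigraph
/-- The set of words of the form `w₁u¹w₂u²⋯w_qu^q`, where each `u^i` is an arbitrary
(possibly empty) word over the alphabet `A i`. -/
def interleaveSet {V : Type*} (w : List V) (A : Fin w.length → Set (V ⊕ V)) :
    Set (List (V ⊕ V)) :=
  {b | ∃ us : Fin w.length → List (V ⊕ V),
    (∀ i : Fin w.length, ∀ a ∈ us i, a ∈ A i) ∧
    b = ((List.finRange w.length).map fun i => Sum.inl (w.get i) :: us i).flatten}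

section AuxDecomp

open Multigraph

variable {V : Type*}

/-- The binary relation underlying `BAdmissible`, for use with `List.Pairwise`. -/
def BRel (G : Multigraph V) (p q : V ⊕ V) : Prop :=
  ∀ x : V, p = Sum.inl x →
    (∀ y : V, q = Sum.inl y → ¬ G.Adj x y) ∧ ∀ a : V, q = Sum.inr a → ¬ G.Adj x a

lemma bAdmissible_iff_pairwise (G : Multigraph V) (b : List (V ⊕ V)) :
    BAdmissible G b ↔
      (∀ h : b ≠ [], ∃ x : V, b.head h = Sum.inl x) ∧ b.Pairwise (BRel G) := by
  unfold BAdmissible BRel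
  rw [List.pairwise_iff_get]

/-- Flattened block word `w₁ u¹ w₂ u² ⋯`, with `uⁱ` barred. -/
def Fl (w : List V) (us : Fin w.length → List V) : List (V ⊕ V) :=
  ((List.finRange w.length).map fun i => Sum.inl (w.get i) :: (us i).map Sum.inr).flatten

lemma Fl_nil (us : Fin ([] : List V).length → List V) : Fl [] us = [] := rfl

lemma Fl_cons (c : V) (w : List V) (us : Fin (w.length + 1) → List V) :
    Fl (c :: w) us =
      Sum.inl c :: ((us 0).map Sum.inr ++ Fl w fun i => us i.succ) := by
  have h : List.finRange (c :: w).length = 0 :: (List.finRange w.length).map Fin.succ :=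
    List.finRange_succ
  rw [Fl, h, List.map_cons, List.map_map, List.flatten_cons, Fl]
  simp [Function.comp_def]

lemma Fl_head (w : List V) (us : Fin w.length → List V) (h : Fl w us ≠ []) :
    ∃ x : V, (Fl w us).head h = Sum.inl x := by
  cases w with
  | nil => exact absurd (Fl_nil us) h
  | cons c w => exact ⟨c, by simp [Fl_cons]⟩

lemma Fl_filterMap (w : List V) (us : Fin w.length → List V) :
    (Fl w us).filterMap Sum.getLeft? = w := by
  induction w with
  | nil => simp [Fl_nil]
  | cons c w ih =>
    rw [Fl_cons]
    simp [List.filterMap_cons, List.filterMap_append, List.filterMap_map,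
      Function.comp_def, ih]

lemma map_inr_filterMap (u : List (V ⊕ V)) (h : ∀ y ∈ u, y.isRight = true) :
    (u.filterMap Sum.getRight?).map Sum.inr = u := by
  induction u with
  | nil => simp
  | cons a t ih =>
    cases a with
    | inl v => simpa using h (Sum.inl v) (by simp)
    | inr v =>
      rw [List.filterMap_cons]
      simp only [Sum.getRight?, List.map_cons]
      rw [ih fun y hy => h y (by simp [hy])]

lemma headLeft_takeWhile (u : List V) (r : List (V ⊕ V))
    (hr : ∀ h : r ≠ [], ∃ x : V, r.head h = Sum.inl x) :
    (u.map Sum.inr ++ r).takeWhile (fun x => x.isRight) = u.map Sum.inr ∧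
      (u.map Sum.inr ++ r).dropWhile (fun x => x.isRight) = r := by
  induction u with
  | nil =>
    simp only [List.map_nil, List.nil_append]
    cases r with
    | nil => simp
    | cons a t =>
      obtain ⟨x, hx⟩ := hr (by simp)
      have : a = Sum.inl x := by simpa using hx
      subst this
      constructor
      · rw [List.takeWhile_cons_of_neg] <;> simp
      · rw [List.dropWhile_cons_of_neg]; simp
  | cons a u ih =>
    simp only [List.map_cons, List.cons_append]
    constructor
    · rw [List.takeWhile_cons_of_pos (by simp), ih.1]
    · rw [List.dropWhile_cons_of_pos (by simp), ih.2]

lemma exists_decomp (w : List V) : ∀ b : List (V ⊕ V),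
    b.filterMap Sum.getLeft? = w → (∀ h : b ≠ [], ∃ x : V, b.head h = Sum.inl x) →
    ∃ us : Fin w.length → List V, b = Fl w us := by
  induction w with
  | nil =>
    intro b hb hhead
    have hbnil : b = [] := by
      cases b with
      | nil => rfl
      | cons a t =>
        obtain ⟨x, hx⟩ := hhead (by simp)
        have : a = Sum.inl x := by simpa using hx
        subst this
        simp [List.filterMap_cons, Sum.getLeft?] at hb
    subst hbnil
    exact ⟨fun i => [], (Fl_nil _).symm⟩
  | cons c w' ih =>
    intro b hb hhead
    cases b with
    | nil => simp at hb
    | cons a t =>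
      obtain ⟨x, hx⟩ := hhead (by simp)
      have hax : a = Sum.inl x := by simpa using hx
      subst hax
      rw [List.filterMap_cons] at hb
      simp only [Sum.getLeft?] at hb
      rw [List.cons.injEq] at hb
      obtain ⟨hxc, ht⟩ := hb
      subst hxc
      set u := t.takeWhile (fun y => y.isRight) with hu
      set r := t.dropWhile (fun y => y.isRight) with hrdef
      have htu : u ++ r = t := List.takeWhile_append_dropWhile
      have hrhead : ∀ h : r ≠ [], ∃ y : V, r.head h = Sum.inl y := by
        intro h
        have hn : (r.head h).isRight = false :=
          List.head_dropWhile_not (fun y : V ⊕ V => y.isRight) h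
        cases hy : r.head h with
        | inl y => exact ⟨y, rfl⟩
        | inr y => rw [hy] at hn; simp at hn
      have hufm : u.filterMap Sum.getLeft? = [] := by
        rw [List.filterMap_eq_nil_iff]
        intro y hy
        have hyr := List.mem_takeWhile_imp hy
        cases y with
        | inl v => simp at hyr
        | inr v => simp [Sum.getLeft?]
      have hrfm : r.filterMap Sum.getLeft? = w' := by
        have h2 := congrArg (List.filterMap Sum.getLeft?) htu
        rw [List.filterMap_append, hufm, List.nil_append, ht] at h2
        exact h2
      obtain ⟨us', hb'⟩ := ih r hrfm hrhead
      have hall : ∀ y ∈ u, y.isRight = true := fun y hy => List.mem_takeWhile_imp hy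
      refine ⟨Fin.cons (u.filterMap Sum.getRight?) us', ?_⟩
      rw [Fl_cons]
      have h0 : (Fin.cons (u.filterMap Sum.getRight?) us' : Fin (w'.length + 1) → List V) 0
          = u.filterMap Sum.getRight? := rfl
      have hsucc : (fun i : Fin w'.length => (Fin.cons (u.filterMap Sum.getRight?) us' :
          Fin (w'.length + 1) → List V) i.succ) = us' := by
        funext i; exact Fin.cons_succ _ _ _
      rw [h0, hsucc, map_inr_filterMap u hall, ← hb', htu]

lemma Fl_injective (w : List V) : Function.Injective (Fl w) := by
  have H : ∀ (w : List V) (us vs : Fin w.length → List V), Fl w us = Fl w vs → us = vs := by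
    intro w
    induction w with
    | nil =>
      intro us vs _
      funext i
      exact absurd i.2 (by simp)
    | cons c w' ih =>
      show ∀ us vs : Fin (w'.length + 1) → List V, _
      intro us vs h
      rw [Fl_cons, Fl_cons, List.cons.injEq] at h
      obtain ⟨-, h2⟩ := h
      obtain ⟨t1, d1⟩ := headLeft_takeWhile (us 0) (Fl w' fun i => us i.succ)
        (Fl_head w' _)
      obtain ⟨t2, d2⟩ := headLeft_takeWhile (vs 0) (Fl w' fun i => vs i.succ)
        (Fl_head w' _)
      have e0 : us 0 = vs 0 := by
        have hmap : (us 0).map (Sum.inr : V → V ⊕ V) = (vs 0).map Sum.inr := by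
          rw [← t1, ← t2, h2]
        exact List.map_injective_iff.2 Sum.inr_injective hmap
      have etail : (fun i : Fin w'.length => us i.succ) = fun i => vs i.succ := by
        apply ih
        rw [← d1, ← d2, h2]
      funext i
      refine Fin.cases ?_ ?_ i
      · exact e0
      · intro j; exact congrFun etail j
  exact fun us vs h => H w us vs h

lemma mem_take_get_iff {w : List V} (i : Fin w.length) (c : V) :
    c ∈ w.take ((i : ℕ) + 1) ↔ ∃ j : Fin w.length, (j : ℕ) ≤ (i : ℕ) ∧ w.get j = c := by
  rw [List.mem_take_iff_getElem]
  constructor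
  · rintro ⟨j, hj, rfl⟩
    have hj1 : j < w.length := lt_of_lt_of_le hj (min_le_right _ _)
    have hj2 : j < (i : ℕ) + 1 := lt_of_lt_of_le hj (min_le_left _ _)
    refine ⟨⟨j, hj1⟩, ?_, rfl⟩
    simpa using Nat.lt_succ_iff.1 hj2
  · rintro ⟨j, hji, rfl⟩
    have : (j : ℕ) < min ((i : ℕ) + 1) w.length := by
      have := j.2; have := i.2; omega
    exact ⟨j, this, rfl⟩

lemma pairwise_map_finRange {n : ℕ} {α : Type*} (f : Fin n → List α)
    (S : List α → List α → Prop) :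
    ((List.finRange n).map f).Pairwise S ↔ ∀ i j : Fin n, i < j → S (f i) (f j) := by
  rw [List.pairwise_map]
  constructor
  · intro h i j hij
    rw [List.pairwise_iff_getElem] at h
    have hi : (i : ℕ) < (List.finRange n).length := by simp
    have hj : (j : ℕ) < (List.finRange n).length := by simp
    have := h i j hi hj hij
    simpa using this
  · intro h
    exact (List.pairwise_lt_finRange n).imp fun hab => h _ _ hab

end AuxDecomp

section AuxAdj

open Multigraph

variable {V : Type*} [DecidableEq V]

lemma w_not_adj {G : Multigraph V} {w : List V} (hw : w ∈ WSpace G)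
    {i j : Fin w.length} (hij : i < j) : ¬ G.Adj (w.get i) (w.get j) := by
  intro hadj
  by_cases hval : w.get i = w.get j
  · have hl : G.Adj (w.get i) (w.get i) := by rw [← hval] at hadj; exact hadj
    have h1 : w.count (w.get i) ≤ 1 := hw.2 _ hl
    have h2 : 2 ≤ w.count (w.get i) := by
      rw [← List.duplicate_iff_two_le_count]
      exact List.duplicate_iff_exists_distinct_get.2 ⟨i, j, hij, rfl, hval⟩
    omega
  · rcases hw.1 _ _ hval hadj with h | h
    · exact absurd (w.get_mem i) (List.count_eq_zero.1 h)
    · exact absurd (w.get_mem j) (List.count_eq_zero.1 h)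

lemma pairwise_Fl {G : Multigraph V} {w : List V} (hw : w ∈ WSpace G)
    (us : Fin w.length → List V)
    (hus : ∀ i, ∀ a ∈ us i, a ∉ G.nbhd {c | c ∈ w.take ((i : ℕ) + 1)}) :
    (Fl w us).Pairwise (BRel G) := by
  rw [Fl, List.pairwise_flatten]
  constructor
  · intro l hl
    rw [List.mem_map] at hl
    obtain ⟨i, -, rfl⟩ := hl
    rw [List.pairwise_cons]
    constructor
    · intro y hy x hx
      cases Sum.inl.inj hx
      rw [List.mem_map] at hy
      obtain ⟨a, ha, rfl⟩ := hy
      refine ⟨fun y' hy' => by simp at hy', fun a' ha' => ?_⟩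
      obtain rfl : a = a' := Sum.inr.inj ha'
      intro hadj
      exact hus i a ha ⟨w.get i, (mem_take_get_iff i _).2 ⟨i, le_refl _, rfl⟩, hadj⟩
    · rw [List.pairwise_map]
      rw [List.pairwise_iff_getElem]
      intro k l _ _ _ x hx
      simp at hx
  · rw [pairwise_map_finRange]
    intro i j hij x hx y hy v hv
    rcases List.mem_cons.1 hx with rfl | hx'
    · cases Sum.inl.inj hv
      constructor
      · intro y' hy'
        rcases List.mem_cons.1 hy with h0 | hy2
        · rw [h0] at hy'
          cases Sum.inl.inj hy'
          exact w_not_adj hw hij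
        · rw [List.mem_map] at hy2
          obtain ⟨a, -, rfl⟩ := hy2
          simp at hy'
      · intro a hy'
        rcases List.mem_cons.1 hy with h0 | hy2
        · rw [h0] at hy'; simp at hy'
        · rw [List.mem_map] at hy2
          obtain ⟨a2, ha2, rfl⟩ := hy2
          obtain rfl : a2 = a := Sum.inr.inj hy'
          intro hadj
          exact hus j a2 ha2
            ⟨w.get i, (mem_take_get_iff j _).2 ⟨i, le_of_lt hij, rfl⟩, hadj⟩
    · rw [List.mem_map] at hx'
      obtain ⟨a, -, rfl⟩ := hx'
      simp at hv

lemma constraints_of_pairwise {G : Multigraph V} (w : List V)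
    (us : Fin w.length → List V) (h : (Fl w us).Pairwise (BRel G)) :
    ∀ i, ∀ a ∈ us i, a ∉ G.nbhd {c | c ∈ w.take ((i : ℕ) + 1)} := by
  rw [Fl, List.pairwise_flatten] at h
  intro i a ha hmem
  obtain ⟨c, hc, hadj⟩ := hmem
  obtain ⟨j, hji, rfl⟩ := (mem_take_get_iff i c).1 hc
  rcases eq_or_lt_of_le hji with heq | hlt
  · have hji' : j = i := Fin.ext heq
    subst hji'
    have hblock := h.1 _ (List.mem_map.2 ⟨j, List.mem_finRange j, rfl⟩)
    rw [List.pairwise_cons] at hblock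
    have := hblock.1 (Sum.inr a) (List.mem_map.2 ⟨a, ha, rfl⟩) (w.get j) rfl
    exact this.2 a rfl hadj
  · have hb := (pairwise_map_finRange _ _).1 h.2 j i hlt
    have := hb (Sum.inl (w.get j)) List.mem_cons_self (Sum.inr a)
      (List.mem_cons.2 (Or.inr (List.mem_map.2 ⟨a, ha, rfl⟩))) (w.get j) rfl
    exact this.2 a rfl hadj

end AuxAdj

section AuxMeasure

open Multigraph ENNReal

variable {V : Type*}

lemma tsum_pi_prod : ∀ {n : ℕ} (β : Fin n → Type*) (h : ∀ i, β i → ℝ≥0∞),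
    ∑' f : ∀ i, β i, ∏ i, h i (f i) = ∏ i, ∑' x : β i, h i x := by
  intro n
  induction n with
  | zero =>
    intro β h
    rw [tsum_eq_single (fun i => i.elim0) (fun b hb => absurd (Subsingleton.elim b _) hb)]
    simp
  | succ n ih =>
    intro β h
    rw [← Equiv.tsum_eq (Fin.consEquiv β) (fun f => ∏ i, h i (f i))]
    have key : ∀ c : β 0 × (∀ i : Fin n, β i.succ),
        (∏ i, h i (Fin.consEquiv β c i)) = h 0 c.1 * ∏ i : Fin n, h i.succ (c.2 i) := by
      rintro ⟨a, g⟩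
      rw [Fin.prod_univ_succ]
      simp [Fin.consEquiv]
    simp only [key]
    rw [ENNReal.tsum_prod']
    dsimp only
    simp only [ENNReal.tsum_mul_left]
    rw [ENNReal.tsum_mul_right, ih (fun i => β i.succ) (fun i => h i.succ),
      Fin.prod_univ_succ]

lemma tsum_list_prod {γ : Type*} (f : γ → ℝ≥0∞) :
    ∑' u : List γ, (u.map f).prod = (1 - ∑' x : γ, f x)⁻¹ := by
  rw [← Equiv.tsum_eq (List.equivSigmaTuple (α := γ)).symm (fun u => (u.map f).prod),
    ENNReal.tsum_sigma']
  have key : ∀ (n : ℕ) (t : Fin n → γ),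
      (((List.equivSigmaTuple (α := γ)).symm ⟨n, t⟩).map f).prod = ∏ i, f (t i) := by
    intro n t
    show ((List.ofFn t).map f).prod = _
    rw [List.map_ofFn, List.prod_ofFn]
    rfl
  calc ∑' (n : ℕ) (t : Fin n → γ),
        (((List.equivSigmaTuple (α := γ)).symm ⟨n, t⟩).map f).prod
      = ∑' n : ℕ, (∑' x : γ, f x) ^ n := by
        refine tsum_congr fun n => ?_
        simp only [key]
        rw [tsum_pi_prod (fun _ : Fin n => γ) (fun _ => f)]
        simp
  _ = (1 - ∑' x : γ, f x)⁻¹ := ENNReal.tsum_geometric _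

variable [Fintype V]

lemma mass_nonneg (μ : V → ℝ) (hμ0 : ∀ v, 0 ≤ μ v) (S : Set V) : 0 ≤ mass μ S :=
  Finset.sum_nonneg fun v _ => Set.indicator_apply_nonneg fun _ => hμ0 v

lemma ofReal_mass_add_compl (μ : V → ℝ) (hμ : FullSupport μ) (S : Set V) :
    ENNReal.ofReal (mass μ S) + ENNReal.ofReal (mass μ Sᶜ) = 1 := by
  have hμ0 : ∀ v, 0 ≤ μ v := fun v => (hμ.1 v).le
  rw [← ENNReal.ofReal_add (mass_nonneg μ hμ0 S) (mass_nonneg μ hμ0 Sᶜ)]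
  have hmass : mass μ S + mass μ Sᶜ = 1 := by
    rw [mass, mass, ← Finset.sum_add_distrib, ← hμ.2]
    refine Finset.sum_congr rfl fun v _ => ?_
    by_cases hv : v ∈ S <;>
      simp [Set.indicator_of_mem, Set.indicator_of_notMem, hv]
  rw [hmass, ENNReal.ofReal_one]

lemma tsum_subtype_ofReal (μ : V → ℝ) (hμ0 : ∀ v, 0 ≤ μ v) (S : Set V) :
    ∑' x : S, ENNReal.ofReal (μ (x : V)) = ENNReal.ofReal (mass μ S) := by
  rw [tsum_subtype S (fun v => ENNReal.ofReal (μ v)), tsum_fintype, mass,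
    ENNReal.ofReal_sum_of_nonneg
      (fun v _ => Set.indicator_apply_nonneg fun _ => hμ0 v)]
  refine Finset.sum_congr rfl fun v _ => ?_
  by_cases hv : v ∈ S <;>
    simp [Set.indicator_of_mem, Set.indicator_of_notMem, hv]

variable [DecidableEq V]

lemma beq_inl_inl (v u : V) : ((Sum.inl v : V ⊕ V) == Sum.inl u) = (v == u) := rfl
lemma beq_inr_inr (v u : V) : ((Sum.inr v : V ⊕ V) == Sum.inr u) = (v == u) := rfl
lemma beq_inl_inr (v u : V) : ((Sum.inl v : V ⊕ V) == Sum.inr u) = false := rfl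
lemma beq_inr_inl (v u : V) : ((Sum.inr v : V ⊕ V) == Sum.inl u) = false := rfl

/-- `ν` with values in `ℝ≥0∞`. -/
noncomputable def nuEnn (μ : V → ℝ) (b : List (V ⊕ V)) : ℝ≥0∞ :=
  ∏ v : V, ENNReal.ofReal (μ v) ^ (b.count (Sum.inl v) + b.count (Sum.inr v))

lemma nuEnn_ne_top (μ : V → ℝ) (b : List (V ⊕ V)) : nuEnn μ b ≠ ∞ := by
  rw [nuEnn]
  refine (ENNReal.prod_lt_top fun v _ => ?_).ne
  exact ENNReal.pow_lt_top ENNReal.ofReal_lt_top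

lemma nuEnn_toReal (μ : V → ℝ) (hμ0 : ∀ v, 0 ≤ μ v) (b : List (V ⊕ V)) :
    (nuEnn μ b).toReal = nu μ b := by
  rw [nuEnn, ENNReal.toReal_prod, nu]
  refine Finset.prod_congr rfl fun v _ => ?_
  rw [ENNReal.toReal_pow, ENNReal.toReal_ofReal (hμ0 v)]

lemma nuEnn_nil (μ : V → ℝ) : nuEnn μ [] = 1 := by simp [nuEnn]

lemma nuEnn_append (μ : V → ℝ) (x y : List (V ⊕ V)) :
    nuEnn μ (x ++ y) = nuEnn μ x * nuEnn μ y := by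
  rw [nuEnn, nuEnn, nuEnn, ← Finset.prod_mul_distrib]
  refine Finset.prod_congr rfl fun v _ => ?_
  rw [List.count_append, List.count_append, ← pow_add]
  congr 1
  omega

lemma nuEnn_inl (μ : V → ℝ) (v : V) :
    nuEnn μ [Sum.inl v] = ENNReal.ofReal (μ v) := by
  rw [nuEnn, Finset.prod_eq_single v]
  · have h1 : List.count (Sum.inl v : V ⊕ V) [Sum.inl v] = 1 := by
      simp only [List.count_cons, List.count_nil, beq_inl_inl, beq_inr_inr,
        beq_inl_inr, beq_inr_inl]
      simp
    have h2 : List.count (Sum.inr v : V ⊕ V) [Sum.inl v] = 0 := by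
      simp only [List.count_cons, List.count_nil, beq_inl_inl, beq_inr_inr,
        beq_inl_inr, beq_inr_inl]
      simp
    rw [h1, h2, pow_one]
  · intro u _ huv
    have h1 : List.count (Sum.inl u : V ⊕ V) [Sum.inl v] = 0 := by
      simp only [List.count_cons, List.count_nil, beq_inl_inl, beq_inr_inr,
        beq_inl_inr, beq_inr_inl]
      simp [beq_eq_false_iff_ne, Ne.symm huv]
    have h2 : List.count (Sum.inr u : V ⊕ V) [Sum.inl v] = 0 := by
      simp only [List.count_cons, List.count_nil, beq_inl_inl, beq_inr_inr,
        beq_inl_inr, beq_inr_inl]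
      simp
    rw [h1, h2, pow_zero]
  · intro hv; exact absurd (Finset.mem_univ v) hv

lemma nuEnn_inr (μ : V → ℝ) (v : V) :
    nuEnn μ [Sum.inr v] = ENNReal.ofReal (μ v) := by
  rw [nuEnn, Finset.prod_eq_single v]
  · have h1 : List.count (Sum.inl v : V ⊕ V) [Sum.inr v] = 0 := by
      simp only [List.count_cons, List.count_nil, beq_inl_inl, beq_inr_inr,
        beq_inl_inr, beq_inr_inl]
      simp
    have h2 : List.count (Sum.inr v : V ⊕ V) [Sum.inr v] = 1 := by
      simp only [List.count_cons, List.count_nil, beq_inl_inl, beq_inr_inr,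
        beq_inl_inr, beq_inr_inl]
      simp
    rw [h1, h2, pow_one]
  · intro u _ huv
    have h1 : List.count (Sum.inl u : V ⊕ V) [Sum.inr v] = 0 := by
      simp only [List.count_cons, List.count_nil, beq_inl_inl, beq_inr_inr,
        beq_inl_inr, beq_inr_inl]
      simp
    have h2 : List.count (Sum.inr u : V ⊕ V) [Sum.inr v] = 0 := by
      simp only [List.count_cons, List.count_nil, beq_inl_inl, beq_inr_inr,
        beq_inl_inr, beq_inr_inl]
      simp [beq_eq_false_iff_ne, Ne.symm huv]
    rw [h1, h2, pow_zero]
  · intro hv; exact absurd (Finset.mem_univ v) hv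

lemma nuEnn_map_inr (μ : V → ℝ) (u : List V) :
    nuEnn μ (u.map Sum.inr) = (u.map fun a => ENNReal.ofReal (μ a)).prod := by
  induction u with
  | nil => simp [nuEnn_nil]
  | cons a u ih =>
    rw [List.map_cons,
      show (Sum.inr a :: u.map Sum.inr : List (V ⊕ V))
          = [Sum.inr a] ++ u.map Sum.inr from rfl,
      nuEnn_append, nuEnn_inr, ih, List.map_cons, List.prod_cons]

lemma nuEnn_Fl (μ : V → ℝ) (w : List V) :
    ∀ us : Fin w.length → List V,
      nuEnn μ (Fl w us) =
        ∏ i, (ENNReal.ofReal (μ (w.get i)) *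
          ((us i).map fun a => ENNReal.ofReal (μ a)).prod) := by
  induction w with
  | nil =>
    intro us
    rw [Fl_nil, nuEnn_nil]
    haveI : IsEmpty (Fin ([] : List V).length) := ⟨fun i => absurd i.2 (by simp)⟩
    exact (Finset.prod_of_isEmpty _).symm
  | cons c w ih =>
    show ∀ us : Fin (w.length + 1) → List V,
      nuEnn μ (Fl (c :: w) us) =
        ∏ i : Fin (w.length + 1),
          (ENNReal.ofReal (μ ((c :: w).get i)) *
            ((us i).map fun a => ENNReal.ofReal (μ a)).prod)
    intro us
    rw [Fl_cons,
      show (Sum.inl c :: ((us 0).map Sum.inr ++ Fl w fun i => us i.succ)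
          : List (V ⊕ V))
        = [Sum.inl c] ++ ((us 0).map Sum.inr ++ Fl w fun i => us i.succ) from rfl,
      nuEnn_append, nuEnn_append, nuEnn_inl, nuEnn_map_inr,
      ih (fun i => us i.succ), Fin.prod_univ_succ]
    simp only [List.get_cons_succ']
    show _ = (ENNReal.ofReal (μ c) * _) * _
    ring

end AuxMeasure

/-- For a connected multigraph `G`, a fully supported `μ` and a
nonempty word `w ∈ 𝕎`, the set of words of `𝔹` whose restriction to `V`-letters is
`w` equals `w₁𝒜₁*w₂𝒜₂*⋯w_q𝒜_q*`, with `𝒜_i = {ā : a ∉ E({w₁,…,w_i})}`, and its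
`ν`-measure is `∏_i μ(w_i)/μ(E({w₁,…,w_i}))`. -/
theorem bset_fiber_interleave {V : Type*} [Fintype V] [DecidableEq V]
    (G : Multigraph V) (hconn : G.Connected) (μ : V → ℝ) (hμ : FullSupport μ)
    (w : List V) (hw : w ∈ WSpace G) (hne : w ≠ []) :
    {b ∈ BSet G | b.filterMap Sum.getLeft? = w} =
      interleaveSet w (fun i =>
        {x : V ⊕ V | ∃ a : V, x = Sum.inr a ∧
          a ∉ G.nbhd {c | c ∈ w.take ((i : ℕ) + 1)}}) ∧
    nuSet μ {b ∈ BSet G | b.filterMap Sum.getLeft? = w} =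
      ∏ i : Fin w.length,
        μ (w.get i) / mass μ (G.nbhd {c | c ∈ w.take ((i : ℕ) + 1)}) := by
  classical
  have hμ0 : ∀ v, 0 ≤ μ v := fun v => (hμ.1 v).le
  -- Part 1 : set equality
  have hEq : {b ∈ BSet G | b.filterMap Sum.getLeft? = w} =
      interleaveSet w (fun i =>
        {x : V ⊕ V | ∃ a : V, x = Sum.inr a ∧
          a ∉ G.nbhd {c | c ∈ w.take ((i : ℕ) + 1)}}) := by
    ext b
    constructor
    · rintro ⟨hbB, hbf⟩
      obtain ⟨hhead, hpw⟩ := (bAdmissible_iff_pairwise G b).1 hbB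
      obtain ⟨us, rfl⟩ := exists_decomp w b hbf hhead
      refine ⟨fun i => (us i).map Sum.inr, fun i x hx => ?_, rfl⟩
      rw [List.mem_map] at hx
      obtain ⟨a, ha, rfl⟩ := hx
      exact ⟨a, rfl, constraints_of_pairwise w us hpw i a ha⟩
    · rintro ⟨vs, hvs, rfl⟩
      have hmapeq : ∀ i, ((vs i).filterMap Sum.getRight?).map Sum.inr = vs i := by
        intro i
        apply map_inr_filterMap
        intro y hy
        obtain ⟨a, rfl, -⟩ := hvs i y hy
        rfl
      have hfun : (fun i => Sum.inl (w.get i) :: vs i) = fun i =>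
          Sum.inl (w.get i) :: ((vs i).filterMap Sum.getRight?).map Sum.inr := by
        funext i
        rw [hmapeq i]
      have hFl : ((List.finRange w.length).map
            fun i => Sum.inl (w.get i) :: vs i).flatten
          = Fl w fun i => (vs i).filterMap Sum.getRight? := by
        rw [Fl, hfun]
      have husE : ∀ i, ∀ a ∈ (vs i).filterMap Sum.getRight?,
          a ∉ G.nbhd {c | c ∈ w.take ((i : ℕ) + 1)} := by
        intro i a ha
        rw [List.mem_filterMap] at ha
        obtain ⟨x, hx, hxa⟩ := ha
        obtain ⟨a', rfl, ha'⟩ := hvs i x hx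
        obtain rfl : a' = a := by simpa using hxa
        exact ha'
      constructor
      · show BAdmissible G _
        rw [hFl]
        exact (bAdmissible_iff_pairwise G _).2
          ⟨fun h => Fl_head w _ h, pairwise_Fl hw _ husE⟩
      · rw [hFl]
        exact Fl_filterMap w _
  refine ⟨hEq, ?_⟩
  -- Part 2 : the measure computation
  set E : Fin w.length → Set V :=
    fun i => G.nbhd {c | c ∈ w.take ((i : ℕ) + 1)} with hE
  have hrange : {b ∈ BSet G | b.filterMap Sum.getLeft? = w}
      = Set.range (fun f : (∀ i : Fin w.length, List ((E i)ᶜ : Set V)) =>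
          Fl w fun i => (f i).map Subtype.val) := by
    rw [hEq]
    ext b
    constructor
    · rintro ⟨vs, hvs, rfl⟩
      have hmapeq : ∀ i, ((vs i).filterMap Sum.getRight?).map Sum.inr = vs i := by
        intro i
        apply map_inr_filterMap
        intro y hy
        obtain ⟨a, rfl, -⟩ := hvs i y hy
        rfl
      have hfun : (fun i => Sum.inl (w.get i) :: vs i) = fun i =>
          Sum.inl (w.get i) :: ((vs i).filterMap Sum.getRight?).map Sum.inr := by
        funext i
        rw [hmapeq i]
      have hFl : ((List.finRange w.length).map
            fun i => Sum.inl (w.get i) :: vs i).flatten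
          = Fl w fun i => (vs i).filterMap Sum.getRight? := by
        rw [Fl, hfun]
      have husE : ∀ i, ∀ a ∈ (vs i).filterMap Sum.getRight?, a ∈ (E i)ᶜ := by
        intro i a ha
        rw [List.mem_filterMap] at ha
        obtain ⟨x, hx, hxa⟩ := ha
        obtain ⟨a', rfl, ha'⟩ := hvs i x hx
        obtain rfl : a' = a := by simpa using hxa
        exact ha'
      refine ⟨fun i => ((vs i).filterMap Sum.getRight?).attach.map
        (fun z => (⟨z.1, husE i z.1 z.2⟩ : ((E i)ᶜ : Set V))), ?_⟩
      show Fl w _ = _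
      rw [hFl]
      congr 1
      funext i
      rw [List.map_map]
      exact List.attach_map_subtype_val _
    · rintro ⟨f, rfl⟩
      refine ⟨fun i => (f i).map fun z => Sum.inr z.1, fun i x hx => ?_, ?_⟩
      · rw [List.mem_map] at hx
        obtain ⟨z, hz, rfl⟩ := hx
        exact ⟨z.1, rfl, z.2⟩
      · show Fl w (fun i => (f i).map Subtype.val) = _
        rw [Fl]
        simp only [List.map_map]
        rfl
  have hGGinj : Function.Injective
      (fun f : (∀ i : Fin w.length, List ((E i)ᶜ : Set V)) =>
        Fl w fun i => (f i).map Subtype.val) := by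
    intro f g hfg
    have h2 := Fl_injective w hfg
    funext i
    have h3 := congrFun h2 i
    exact List.map_injective_iff.2 Subtype.val_injective h3
  have hmainEnn : (∑' b : ↥(Set.range
        (fun f : (∀ i : Fin w.length, List ((E i)ᶜ : Set V)) =>
          Fl w fun i => (f i).map Subtype.val)), nuEnn μ (b : List (V ⊕ V)))
      = ∏ i : Fin w.length,
          ENNReal.ofReal (μ (w.get i)) / ENNReal.ofReal (mass μ (E i)) := by
    rw [tsum_range (fun b => nuEnn μ b) hGGinj]
    have hN : ∀ f : (∀ i : Fin w.length, List ((E i)ᶜ : Set V)),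
        nuEnn μ (Fl w fun i => (f i).map Subtype.val)
          = ∏ i, (ENNReal.ofReal (μ (w.get i)) *
              ((f i).map fun z => ENNReal.ofReal (μ z.1)).prod) := by
      intro f
      rw [nuEnn_Fl μ w (fun i => (f i).map Subtype.val)]
      refine Finset.prod_congr rfl fun i _ => ?_
      rw [List.map_map]
      rfl
    simp only [hN]
    rw [tsum_pi_prod (fun i => List ((E i)ᶜ : Set V))
      (fun i u => ENNReal.ofReal (μ (w.get i)) *
        (u.map fun z => ENNReal.ofReal (μ z.1)).prod)]
    refine Finset.prod_congr rfl fun i _ => ?_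
    rw [ENNReal.tsum_mul_left,
      tsum_list_prod (fun z : ((E i)ᶜ : Set V) => ENNReal.ofReal (μ z.1)),
      tsum_subtype_ofReal μ hμ0 ((E i)ᶜ)]
    have hsub : (1 : ENNReal) - ENNReal.ofReal (mass μ ((E i)ᶜ))
        = ENNReal.ofReal (mass μ (E i)) := by
      conv_lhs => rw [← ofReal_mass_add_compl μ hμ (E i)]
      rw [ENNReal.add_sub_cancel_right ENNReal.ofReal_ne_top]
    rw [hsub, ENNReal.div_eq_inv_mul]
    exact mul_comm _ _
  rw [hrange]
  have h1 : nuSet μ (Set.range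
      (fun f : (∀ i : Fin w.length, List ((E i)ᶜ : Set V)) =>
        Fl w fun i => (f i).map Subtype.val))
      = (∑' b : ↥(Set.range
          (fun f : (∀ i : Fin w.length, List ((E i)ᶜ : Set V)) =>
            Fl w fun i => (f i).map Subtype.val)),
          nuEnn μ (b : List (V ⊕ V))).toReal := by
    rw [ENNReal.tsum_toReal_eq (fun _ => nuEnn_ne_top μ _)]
    exact tsum_congr fun b => (nuEnn_toReal μ hμ0 _).symm
  rw [h1, hmainEnn, ENNReal.toReal_prod]
  refine Finset.prod_congr rfl fun i _ => ?_
  rw [ENNReal.toReal_div, ENNReal.toReal_ofReal (hμ0 _),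
    ENNReal.toReal_ofReal (mass_nonneg μ hμ0 _)]
end

section
/- Let G=(V,E) be a connected multigraph, Φ an admissible matching policy on G and μ∈ℳ(V). Let Φ̂ be a matching policy extending Φ on the minimal blow-up graph Ĝ and μ̂∈ℳ(V̂) a measure extending μ. Let Q be the quadratic function Q(ŵ)=Σ_{i∈V}|ŵ|_i² + Σ_{i∈V₁}|ŵ|_{i̲}² on states of the model on Ĝ. Then for every w∈𝕎 (which is also a state of the model on Ĝ), the one-step drifts satisfy Δ^Φ_μ Q(w) ≤ Δ̂^Φ̂_μ̂ Q(w). -/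
open scoped BigOperators

attribute [local instance] Classical.propDecidable

namespace Multigraph

variable {V : Type*}

/-- The minimal blow-up graph `Ĝ` of `G`, on the vertex set `V̂ = V ∪ V̱₁`: each
self-looped node `i` is duplicated into `i` and a copy `i̱` having the same neighborhood,
the self-loop being replaced by the edge `(i, i̱)`; copies are encoded via `Sum.inr`. -/
def blowup (G : Multigraph V) : Multigraph (V ⊕ {v : V // G.Adj v v}) where
  Adj x y :=
    match x, y with
    | Sum.inl u, Sum.inl v => G.Adj u v ∧ u ≠ v
    | Sum.inl u, Sum.inr i => G.Adj i.1 u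
    | Sum.inr i, Sum.inl u => G.Adj i.1 u
    | Sum.inr _, Sum.inr _ => False
  symm := by
    rintro (u | i) (v | j) h
    · exact ⟨G.symm u v h.1, h.2.symm⟩
    · exact h
    · exact h
    · exact h
/-- `μ̂` extends `μ` on the blow-up graph `Ĝ`: `μ̂(i) = μ(i)` for `i ∈ V₂` and
`μ̂(i) + μ̂(i̱) = μ(i)` for `i ∈ V₁`. -/
def ExtendsMeasure (G : Multigraph V) (μ : V → ℝ)
    (μh : V ⊕ {v : V // G.Adj v v} → ℝ) : Prop :=
  (∀ v : V, ¬ G.Adj v v → μh (Sum.inl v) = μ v) ∧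
  ∀ i : {v : V // G.Adj v v}, μh (Sum.inl i.1) + μh (Sum.inr i) = μ i.1
/-- `Φ̂` extends `Φ` on `Ĝ`: whenever both systems are in the same state `w ∈ 𝕎`
and welcome the same arrival (so that the sets of available matches coincide), the
distribution of the chosen match is the same under `Φ̂` and `Φ`. -/
def ExtendsPolicy [DecidableEq V] (G : Multigraph V) (pol : Policy G)
    (polh : Policy (blowup G)) : Prop :=
  (∀ w ∈ WSpace G, ∀ v : V, ¬ (G.Adj v v ∧ v ∈ w) → ∀ w' : List V,
    polh.next (w.map Sum.inl) (Sum.inl v) (w'.map Sum.inl) = pol.next w v w') ∧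
  ∀ w ∈ WSpace G, ∀ i : {v : V // G.Adj v v}, (∃ a ∈ w, G.Adj a i.1) → ∀ w' : List V,
    polh.next (w.map Sum.inl) (Sum.inr i) (w'.map Sum.inl) = pol.next w i.1 w'
/-- The one-step drift of a functional `F` for the model `(G',Ψ,λ)` at state `w`:
`Δ F(w) = E[F(W_{n+1}) - F(W_n) | W_n = w]`. -/
noncomputable def drift {V' : Type*} [Fintype V'] [DecidableEq V'] (G' : Multigraph V')
    (pol : Policy G') (lam : V' → ℝ) (F : List V' → ℝ) (w : List V') : ℝ :=
  (∑ v : V', lam v * ∑' w' : List V', pol.next w v w' * F w') - F w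
/-- The quadratic Lyapunov function `Q` on states of the blow-up model:
`Q(ŵ) = Σ_{i∈V} |ŵ|_i² + Σ_{i∈V₁} |ŵ|_{i̱}²`. -/
noncomputable def Qfun [Fintype V] [DecidableEq V] (G : Multigraph V)
    (w : List (V ⊕ {v : V // G.Adj v v})) : ℝ :=
  (∑ i : V, (w.count (Sum.inl i) : ℝ) ^ 2) +
    ∑ i : {v : V // G.Adj v v}, (w.count (Sum.inr i) : ℝ) ^ 2
end Multigraph

open Multigraph

section AuxLemmas

open Multigraph

variable {α : Type*}

private instance sumLawfulBEq {α β : Type*} [BEq α] [BEq β] [LawfulBEq α] [LawfulBEq β] :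
    LawfulBEq (α ⊕ β) where
  eq_of_beq {a b} h := by
    cases a <;> cases b <;>
      simp only [show ∀ (x y : α), ((Sum.inl x : α ⊕ β) == Sum.inl y) = (x == y) from
          fun _ _ => rfl,
        show ∀ (x : α) (y : β), ((Sum.inl x : α ⊕ β) == Sum.inr y) = false from fun _ _ => rfl,
        show ∀ (x : α) (y : β), ((Sum.inr y : α ⊕ β) == Sum.inl x) = false from fun _ _ => rfl,
        show ∀ (x y : β), ((Sum.inr x : α ⊕ β) == Sum.inr y) = (x == y) from
          fun _ _ => rfl] at h
    · rw [eq_of_beq h]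
    · exact absurd h (by simp)
    · exact absurd h (by simp)
    · rw [eq_of_beq h]
  rfl {a} := by
    cases a <;>
      simp only [show ∀ (x y : α), ((Sum.inl x : α ⊕ β) == Sum.inl y) = (x == y) from
          fun _ _ => rfl,
        show ∀ (x y : β), ((Sum.inr x : α ⊕ β) == Sum.inr y) = (x == y) from
          fun _ _ => rfl] <;>
      exact beq_self_eq_true _

private lemma my_count_singleton {α : Type*} [BEq α] [LawfulBEq α] (a b : α) :
    List.count a [b] = if b = a then 1 else 0 := by
  rw [show [b] = b :: [] from rfl, List.count_cons, List.count_nil]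
  simp

private lemma my_count_map {α β : Type*} [BEq α] [LawfulBEq α] [BEq β] [LawfulBEq β]
    (f : α → β) (hf : Function.Injective f) (l : List α) (x : α) :
    (l.map f).count (f x) = l.count x := by
  induction l with
  | nil => rfl
  | cons a t ih => simp [List.count_cons, ih, hf.eq_iff]

private lemma bcount_zero {α : Type*} {inst : BEq α} [law : @LawfulBEq α inst] {a : α}
    {l : List α} (h : a ∉ l) : @List.count α inst a l = 0 :=
  (@List.count_eq_zero α inst law a l).mpr h

private lemma my_count_inr {α β : Type*} [BEq (α ⊕ β)] [LawfulBEq (α ⊕ β)]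
    (u : List α) (j : β) : (u.map (Sum.inl : α → α ⊕ β)).count (Sum.inr j) = 0 := by
  rw [List.count_eq_zero]
  intro h
  obtain ⟨a, _, ha⟩ := List.mem_map.mp h
  exact absurd ha (by simp)

private lemma aux_summable {f : α → ℝ} (h1 : ∑' x, f x = 1) : Summable f := by
  by_contra h
  rw [tsum_eq_zero_of_not_summable h] at h1
  norm_num at h1

private lemma aux_single {f : α → ℝ} (h0 : ∀ x, 0 ≤ f x) (h1 : ∑' x, f x = 1)
    {x0 : α} (hx0 : f x0 = 1) {y : α} (hy : y ≠ x0) : f y = 0 := by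
  classical
  have hs : Summable f := aux_summable h1
  have h2 : ∑ x ∈ ({x0, y} : Finset α), f x ≤ 1 := by
    rw [← h1]
    exact Summable.sum_le_tsum _ (fun x _ => h0 x) hs
  rw [Finset.sum_pair (Ne.symm hy), hx0] at h2
  have := h0 y
  linarith

private lemma aux_tsum_const {f g : α → ℝ} {c : ℝ} (h1 : ∑' x, f x = 1)
    (hc : ∀ x, f x ≠ 0 → g x = c) : (∑' x, f x * g x) = c := by
  have he : ∀ x, f x * g x = c * f x := by
    intro x
    by_cases h : f x = 0
    · simp [h]
    · rw [hc x h]; ring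
  rw [tsum_congr he, tsum_mul_left, h1, mul_one]

private lemma aux_tsum_le {f g : α → ℝ} {c : ℝ} (h0 : ∀ x, 0 ≤ f x) (h1 : ∑' x, f x = 1)
    (hc : ∀ x, f x ≠ 0 → 0 ≤ g x ∧ g x ≤ c) : (∑' x, f x * g x) ≤ c := by
  have hs : Summable f := aux_summable h1
  have hle : ∀ x, f x * g x ≤ c * f x := by
    intro x
    by_cases h : f x = 0
    · simp [h]
    · calc f x * g x ≤ f x * c := mul_le_mul_of_nonneg_left (hc x h).2 (h0 x)
        _ = c * f x := mul_comm _ _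
  have hnn : ∀ x, 0 ≤ f x * g x := by
    intro x
    by_cases h : f x = 0
    · simp [h]
    · exact mul_nonneg (h0 x) (hc x h).1
  have hsum : Summable (fun x => f x * g x) :=
    Summable.of_nonneg_of_le hnn hle (hs.mul_left c)
  calc (∑' x, f x * g x) ≤ ∑' x, c * f x := Summable.tsum_le_tsum hle hsum (hs.mul_left c)
    _ = c := by rw [tsum_mul_left, h1, mul_one]

private lemma aux_eraseIdx_map {β : Type*} (f : α → β) :
    ∀ (l : List α) (k : ℕ), (l.map f).eraseIdx k = (l.eraseIdx k).map f := by
  intro l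
  induction l with
  | nil => intro k; simp
  | cons a t ih =>
    intro k
    cases k with
    | zero => simp
    | succ n => simp [ih n]

private lemma aux_sum_subtype {V : Type*} [Fintype V] (p : V → Prop) (g : Subtype p → ℝ) :
    (∑ i : Subtype p, g i) = ∑ v : V, if h : p v then g ⟨v, h⟩ else 0 := by
  classical
  have h2 : (∑ v ∈ Finset.univ.filter p, if h : p v then g ⟨v, h⟩ else 0)
      = ∑ v : V, if h : p v then g ⟨v, h⟩ else 0 := by
    apply Finset.sum_filter_of_ne
    intro x _ hx
    by_contra hp
    rw [dif_neg hp] at hx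
    exact hx rfl
  rw [← h2, Finset.sum_subtype (p := p) _ (by simp)]
  apply Finset.sum_congr rfl
  intro i _
  rw [dif_pos i.2]

private lemma aux_main {V : Type*} [Fintype V] (p : V → Prop) (μ : V → ℝ)
    (μh : V ⊕ Subtype p → ℝ) (S : V → ℝ) (Sh : V ⊕ Subtype p → ℝ)
    (hm1 : ∀ v, ¬ p v → μh (Sum.inl v) = μ v)
    (hm2 : ∀ i : Subtype p, μh (Sum.inl i.1) + μh (Sum.inr i) = μ i.1)
    (hpos : ∀ x, 0 < μh x)
    (k1 : ∀ v, S v ≤ Sh (Sum.inl v))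
    (k3 : ∀ i : Subtype p, Sh (Sum.inr i) = S i.1) :
    (∑ v : V, μ v * S v) ≤ ∑ x : V ⊕ Subtype p, μh x * Sh x := by
  classical
  rw [Fintype.sum_sum_type]
  have hdec : ∀ v : V, μ v * S v
      = μh (Sum.inl v) * S v + (if h : p v then μh (Sum.inr ⟨v, h⟩) * S v else 0) := by
    intro v
    by_cases h : p v
    · rw [dif_pos h, ← hm2 ⟨v, h⟩]; ring
    · rw [dif_neg h, hm1 v h, add_zero]
  calc (∑ v : V, μ v * S v)
      = ∑ v : V, (μh (Sum.inl v) * S v + if h : p v then μh (Sum.inr ⟨v, h⟩) * S v else 0) :=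
        Finset.sum_congr rfl fun v _ => hdec v
    _ = (∑ v : V, μh (Sum.inl v) * S v)
        + ∑ v : V, (if h : p v then μh (Sum.inr ⟨v, h⟩) * S v else 0) :=
        Finset.sum_add_distrib
    _ = (∑ v : V, μh (Sum.inl v) * S v) + ∑ i : Subtype p, μh (Sum.inr i) * S i.1 := by
        congr 1
        exact (aux_sum_subtype p (fun i => μh (Sum.inr i) * S i.1)).symm
    _ ≤ (∑ v : V, μh (Sum.inl v) * Sh (Sum.inl v))
        + ∑ i : Subtype p, μh (Sum.inr i) * Sh (Sum.inr i) := by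
        apply add_le_add
        · exact Finset.sum_le_sum fun v _ =>
            mul_le_mul_of_nonneg_left (k1 v) (le_of_lt (hpos _))
        · exact le_of_eq (Finset.sum_congr rfl fun i _ => by rw [k3 i])

private lemma aux_Qfun_nonneg {V : Type*} [Fintype V] [DecidableEq V] (G : Multigraph V)
    (l : List (V ⊕ {v : V // G.Adj v v})) : 0 ≤ Qfun G l := by
  unfold Qfun
  positivity

private lemma aux_Qfun_mono {V : Type*} [Fintype V] [DecidableEq V] (G : Multigraph V)
    {l1 l2 : List (V ⊕ {v : V // G.Adj v v})} (h : l1.Sublist l2) : Qfun G l1 ≤ Qfun G l2 := by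
  unfold Qfun
  apply add_le_add <;>
  · apply Finset.sum_le_sum
    intro i _
    exact pow_le_pow_left₀ (by positivity) (Nat.cast_le.mpr (h.count_le _)) 2

private lemma aux_Qfun_append {V : Type*} [Fintype V] [DecidableEq V] (G : Multigraph V)
    (l : List (V ⊕ {v : V // G.Adj v v})) (x : V ⊕ {v : V // G.Adj v v}) (hx : x ∉ l) :
    Qfun G (l ++ [x]) = Qfun G l + 1 := by
  classical
  have hcount : ∀ y : V ⊕ {v : V // G.Adj v v},
      ((l ++ [x]).count y : ℝ) ^ 2 = (l.count y : ℝ) ^ 2 + if x = y then 1 else 0 := by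
    intro y
    rw [List.count_append, my_count_singleton]
    by_cases h : x = y
    · subst h
      rw [List.count_eq_zero.mpr hx]
      simp
    · simp [h]
  have h1 : (∑ i : V, ((l ++ [x]).count (Sum.inl i) : ℝ) ^ 2)
      = (∑ i : V, (l.count (Sum.inl i) : ℝ) ^ 2)
        + ∑ i : V, if x = Sum.inl i then (1 : ℝ) else 0 := by
    rw [← Finset.sum_add_distrib]
    exact Finset.sum_congr rfl fun i _ => hcount (Sum.inl i)
  have h2 : (∑ i : {v : V // G.Adj v v}, ((l ++ [x]).count (Sum.inr i) : ℝ) ^ 2)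
      = (∑ i : {v : V // G.Adj v v}, (l.count (Sum.inr i) : ℝ) ^ 2)
        + ∑ i : {v : V // G.Adj v v}, if x = Sum.inr i then (1 : ℝ) else 0 := by
    rw [← Finset.sum_add_distrib]
    exact Finset.sum_congr rfl fun i _ => hcount (Sum.inr i)
  have h3 : ((∑ i : V, if x = Sum.inl i then (1 : ℝ) else 0)
      + ∑ i : {v : V // G.Adj v v}, if x = Sum.inr i then (1 : ℝ) else 0) = 1 := by
    cases x with
    | inl v => simp
    | inr j => simp
  unfold Qfun
  rw [h1, h2]
  linarith

end AuxLemmas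
/-- Drift comparison for the quadratic function `Q`: for an
admissible policy `Φ` on `G`, a policy `Φ̂` extending `Φ` on `Ĝ` and a measure `μ̂`
extending `μ`, for every `w ∈ 𝕎`, `Δ^Φ_μ Q(w) ≤ Δ̂^Φ̂_μ̂ Q(w)`. -/
theorem drift_quadratic_le_blowup {V : Type*} [Fintype V] [DecidableEq V]
    (G : Multigraph V) (hconn : G.Connected)
    (pol : Policy G) (polh : Policy (blowup G)) (hext : ExtendsPolicy G pol polh)
    (μ : V → ℝ) (hμ : FullSupport μ)
    (μh : V ⊕ {v : V // G.Adj v v} → ℝ) (hμh : FullSupport μh)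
    (hem : ExtendsMeasure G μ μh)
    (w : List V) (hw : w ∈ WSpace G) :
    drift G pol μ (fun u => Qfun G (u.map Sum.inl)) w ≤
      drift (blowup G) polh μh (Qfun G) (w.map Sum.inl) := by
    classical
  have hQnn : ∀ l, 0 ≤ Qfun G l := aux_Qfun_nonneg G
  have hinj : Function.Injective (List.map (Sum.inl : V → V ⊕ {v : V // G.Adj v v})) :=
    List.map_injective_iff.mpr Sum.inl_injective
  have hwb : w.map Sum.inl ∈ WSpace (blowup G) := by
    constructor
    · rintro (u | i) (vv | j) hne hadj
      · obtain ⟨h1, h2⟩ := hadj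
        rcases hw.1 u vv h2 h1 with h | h
        · left
          refine bcount_zero fun hmem => ?_
          obtain ⟨b, hb, hb2⟩ := List.mem_map.mp hmem
          rw [Sum.inl.injEq] at hb2
          exact (List.count_eq_zero.mp h) (hb2 ▸ hb)
        · right
          refine bcount_zero fun hmem => ?_
          obtain ⟨b, hb, hb2⟩ := List.mem_map.mp hmem
          rw [Sum.inl.injEq] at hb2
          exact (List.count_eq_zero.mp h) (hb2 ▸ hb)
      · right
        refine bcount_zero fun hmem => ?_
        obtain ⟨a, _, ha⟩ := List.mem_map.mp hmem
        exact absurd ha (by simp)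
      · left
        refine bcount_zero fun hmem => ?_
        obtain ⟨a, _, ha⟩ := List.mem_map.mp hmem
        exact absurd ha (by simp)
      · exact absurd hadj not_false
    · rintro (u | i) hadj
      · exact absurd rfl hadj.2
      · exact hadj.elim
  have nomem_inl : ∀ v : V, v ∉ w → (Sum.inl v : V ⊕ {v : V // G.Adj v v}) ∉ w.map Sum.inl := by
    intro v hv h
    obtain ⟨a, ha, ha2⟩ := List.mem_map.mp h
    rw [Sum.inl.injEq] at ha2
    exact hv (ha2 ▸ ha)
  have nomem_inr : ∀ j : {v : V // G.Adj v v},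
      (Sum.inr j : V ⊕ {v : V // G.Adj v v}) ∉ w.map Sum.inl := by
    intro j h
    obtain ⟨a, _, ha2⟩ := List.mem_map.mp h
    exact absurd ha2 (by simp)
  -- the two key comparison facts
  have key1 : ∀ v : V,
      (∑' w' : List V, pol.next w v w' * Qfun G (w'.map Sum.inl)) ≤
      ∑' w' : List (V ⊕ {v : V // G.Adj v v}),
        polh.next (w.map Sum.inl) (Sum.inl v) w' * Qfun G w' := by
    intro v
    by_cases hmb : ∃ a ∈ w.map (Sum.inl : V → V ⊕ {v : V // G.Adj v v}),
        (blowup G).Adj a (Sum.inl v)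
    · -- a compatible item is present in the blow-up model
      obtain ⟨a, ha, hadj⟩ := hmb
      obtain ⟨b, hb, rfl⟩ : ∃ b ∈ w, Sum.inl b = a := by
        obtain ⟨b, hb, hb2⟩ := List.mem_map.mp ha
        exact ⟨b, hb, hb2⟩
      have hbb : G.Adj b v ∧ b ≠ v := hadj
      obtain ⟨hbadj, hbne⟩ := hbb
      have hvnot : v ∉ w := by
        intro hv
        rcases hw.1 b v hbne hbadj with h | h
        · exact (List.count_eq_zero.mp h) hb
        · exact (List.count_eq_zero.mp h) hv
      have hcond : ¬ (G.Adj v v ∧ v ∈ w) := fun h => hvnot h.2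
      have hsupp : Function.support
          (fun w' => polh.next (w.map Sum.inl) (Sum.inl v) w' * Qfun G w') ⊆
          Set.range (List.map (Sum.inl : V → V ⊕ {v : V // G.Adj v v})) := by
        intro w' hne
        have hne' : polh.next (w.map Sum.inl) (Sum.inl v) w' ≠ 0 := by
          intro h
          apply hne
          simp [h]
        obtain ⟨k, _, hk2⟩ := polh.matchRule (w.map Sum.inl) hwb (Sum.inl v)
          ⟨Sum.inl b, ha, hadj⟩ w' hne'
        exact ⟨w.eraseIdx k, by rw [hk2, aux_eraseIdx_map]⟩
      rw [← hinj.tsum_eq hsupp]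
      refine le_of_eq (tsum_congr fun u => ?_)
      rw [hext.1 w hw v hcond u]
    · -- no compatible item in the blow-up model: the arriving item is stored
      push_neg at hmb
      have h1 := polh.noMatch (w.map Sum.inl) hwb (Sum.inl v) hmb
      have htot := polh.total (w.map Sum.inl) hwb (Sum.inl v)
      have hSh : (∑' w' : List (V ⊕ {v : V // G.Adj v v}),
          polh.next (w.map Sum.inl) (Sum.inl v) w' * Qfun G w')
          = Qfun G (w.map Sum.inl ++ [Sum.inl v]) := by
        apply aux_tsum_const htot
        intro w' hne
        rcases eq_or_ne w' (w.map Sum.inl ++ [Sum.inl v]) with rfl | h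
        · rfl
        · exact absurd (aux_single (polh.nonneg _ _) htot h1 h) hne
      rw [hSh]
      by_cases hmg : ∃ a ∈ w, G.Adj a v
      · -- a match occurs in the original model: the queue shrinks
        have htotg := pol.total w hw v
        have hle : (∑' w' : List V, pol.next w v w' * Qfun G (w'.map Sum.inl)) ≤
            Qfun G (w.map Sum.inl) := by
          apply aux_tsum_le (pol.nonneg w v) htotg
          intro u hne
          obtain ⟨k, _, hk⟩ := pol.matchRule w hw v hmg u hne
          subst hk
          exact ⟨hQnn _, aux_Qfun_mono G ((w.eraseIdx_sublist k).map Sum.inl)⟩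
        exact hle.trans (aux_Qfun_mono G (List.sublist_append_left _ _))
      · -- no match in either model
        push_neg at hmg
        have h1g := pol.noMatch w hw v hmg
        have htotg := pol.total w hw v
        have hS : (∑' w' : List V, pol.next w v w' * Qfun G (w'.map Sum.inl))
            = Qfun G ((w ++ [v]).map Sum.inl) := by
          apply aux_tsum_const htotg
          intro u hne
          rcases eq_or_ne u (w ++ [v]) with rfl | h
          · rfl
          · exact absurd (aux_single (pol.nonneg w v) htotg h1g h) hne
        rw [hS]
        apply le_of_eq
        rw [List.map_append]
        rfl
  have key3 : ∀ i : {v : V // G.Adj v v},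
      (∑' w' : List (V ⊕ {v : V // G.Adj v v}),
        polh.next (w.map Sum.inl) (Sum.inr i) w' * Qfun G w')
      = ∑' w' : List V, pol.next w i.1 w' * Qfun G (w'.map Sum.inl) := by
    intro i
    by_cases hmg : ∃ a ∈ w, G.Adj a i.1
    · have hmb : ∃ a ∈ w.map (Sum.inl : V → V ⊕ {v : V // G.Adj v v}),
          (blowup G).Adj a (Sum.inr i) := by
        obtain ⟨a, ha, h⟩ := hmg
        exact ⟨Sum.inl a, List.mem_map_of_mem ha, G.symm a i.1 h⟩
      have hsupp : Function.support
          (fun w' => polh.next (w.map Sum.inl) (Sum.inr i) w' * Qfun G w') ⊆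
          Set.range (List.map (Sum.inl : V → V ⊕ {v : V // G.Adj v v})) := by
        intro w' hne
        have hne' : polh.next (w.map Sum.inl) (Sum.inr i) w' ≠ 0 := by
          intro h
          apply hne
          simp [h]
        obtain ⟨k, _, hk2⟩ := polh.matchRule (w.map Sum.inl) hwb (Sum.inr i) hmb w' hne'
        exact ⟨w.eraseIdx k, by rw [hk2, aux_eraseIdx_map]⟩
      rw [← hinj.tsum_eq hsupp]
      exact tsum_congr fun u => by rw [hext.2 w hw i hmg u]
    · push_neg at hmg
      have hvnot : i.1 ∉ w := fun hv => hmg i.1 hv i.2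
      have hmb : ∀ a ∈ w.map (Sum.inl : V → V ⊕ {v : V // G.Adj v v}),
          ¬ (blowup G).Adj a (Sum.inr i) := by
        rintro a ha hadj
        obtain ⟨b, hb, rfl⟩ := List.mem_map.mp ha
        exact hmg b hb (G.symm i.1 b hadj)
      have h1 := polh.noMatch (w.map Sum.inl) hwb (Sum.inr i) hmb
      have htot := polh.total (w.map Sum.inl) hwb (Sum.inr i)
      have hSh : (∑' w' : List (V ⊕ {v : V // G.Adj v v}),
          polh.next (w.map Sum.inl) (Sum.inr i) w' * Qfun G w')
          = Qfun G (w.map Sum.inl ++ [Sum.inr i]) := by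
        apply aux_tsum_const htot
        intro w' hne
        rcases eq_or_ne w' (w.map Sum.inl ++ [Sum.inr i]) with rfl | h
        · rfl
        · exact absurd (aux_single (polh.nonneg _ _) htot h1 h) hne
      have h1g := pol.noMatch w hw i.1 hmg
      have htotg := pol.total w hw i.1
      have hS : (∑' w' : List V, pol.next w i.1 w' * Qfun G (w'.map Sum.inl))
          = Qfun G ((w ++ [i.1]).map Sum.inl) := by
        apply aux_tsum_const htotg
        intro u hne
        rcases eq_or_ne u (w ++ [i.1]) with rfl | h
        · rfl
        · exact absurd (aux_single (pol.nonneg w i.1) htotg h1g h) hne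
      rw [hSh, hS, List.map_append,
        show List.map (Sum.inl : V → V ⊕ {v : V // G.Adj v v}) [i.1] = [Sum.inl i.1] from rfl,
        aux_Qfun_append G _ _ (nomem_inr i),
        aux_Qfun_append G _ _ (nomem_inl i.1 hvnot)]
  simp only [drift]
  apply sub_le_sub_right
  exact aux_main (fun v => G.Adj v v) μ μh
    (fun v => ∑' w' : List V, pol.next w v w' * Qfun G (w'.map Sum.inl))
    (fun x => ∑' w' : List (V ⊕ {v : V // G.Adj v v}),
      polh.next (w.map Sum.inl) x w' * Qfun G w')
    hem.1 hem.2 hμh.1 key1 key3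
end

section
/- Let G=(V,E) be a connected multigraph, Φ a class-admissible matching policy on G and μ∈ℳ(V). Let Φ̂ be a matching policy extending Φ on the minimal blow-up graph Ĝ, μ̂∈ℳ(V̂) a measure extending μ, and Φ̌ a policy on the maximal subgraph Ǧ that reduces Φ. Let L be the linear function L(ŵ)=Σ_{i∈V}|ŵ|_i + Σ_{i∈V₁}|ŵ|_{i̲} (the total length of the state word). Then for every w∈𝕎, the one-step drifts satisfy Δ^Φ_μ L(w) ≤ Δ̂^Φ̂_μ̂ L(w) ≤ Δ̌^Φ̌_μ L(w). -/
open scoped BigOperators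

attribute [local instance] Classical.propDecidable

namespace Multigraph

variable {V : Type*}

section ClassAdm

variable [DecidableEq V]

/-- Class-admissibility: only the oldest stored item of a class may be matched, and the
(random) choice of the matched class only depends on the class detail of the state. -/
def ClassAdmissible (G : Multigraph V) (pol : Policy G) : Prop :=
  (∀ w ∈ WSpace G, ∀ v : V, (∃ a ∈ w, G.Adj a v) → ∀ w' : List V,
    pol.next w v w' ≠ 0 → ∃ j : V, G.Adj j v ∧ j ∈ w ∧ w' = w.erase j) ∧
  ∀ w ∈ WSpace G, ∀ w'' ∈ WSpace G, ∀ v j : V, (∀ i : V, w.count i = w''.count i) →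
    pol.next w v (w.erase j) = pol.next w'' v (w''.erase j)

end ClassAdm
/-- `Φ̌` reduces `Φ` on `Ǧ`: whenever both systems are in the same state `w ∈ 𝕎`
and welcome the same arrival (so that the sets of available matches coincide), the
distribution of the chosen match is the same under `Φ̌` and `Φ`. -/
def ReducesPolicy [DecidableEq V] (G : Multigraph V) (pol : Policy G)
    (polc : Policy (check G)) : Prop :=
  ∀ w ∈ WSpace G, ∀ v : V, ¬ (G.Adj v v ∧ v ∈ w) → ∀ w' : List V,
    polc.next w v w' = pol.next w v w'
end Multigraph

namespace Multigraph

variable {V : Type*}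

/-- Expected length after one arrival: `len - 1` if a compatible item is present,
`len + 1` otherwise. -/
lemma step_exp {V' : Type*} [DecidableEq V'] (G' : Multigraph V') (pol : Policy G')
    (w : List V') (hw : w ∈ WSpace G') (v : V') :
    (∑' w' : List V', pol.next w v w' * ((w'.length : ℝ))) =
      if ∃ a ∈ w, G'.Adj a v then (w.length : ℝ) - 1 else (w.length : ℝ) + 1 := by
  have hsum : Summable (pol.next w v) := by
    by_contra hns
    have h1 := pol.total w hw v
    rw [tsum_eq_zero_of_not_summable hns] at h1
    norm_num at h1
  by_cases h : ∃ a ∈ w, G'.Adj a v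
  · rw [if_pos h]
    have key : ∀ w' : List V', pol.next w v w' * ((w'.length : ℝ)) =
        pol.next w v w' * ((w.length : ℝ) - 1) := by
      intro w'
      by_cases hz : pol.next w v w' = 0
      · simp [hz]
      · obtain ⟨k, _, hk⟩ := pol.matchRule w hw v h w' hz
        have hlt : (k : ℕ) < w.length := k.isLt
        have hlen : w'.length = w.length - 1 := by
          rw [hk, List.length_eraseIdx, if_pos hlt]
        have h1 : 1 ≤ w.length := Nat.one_le_iff_ne_zero.mpr (by omega)
        rw [hlen, Nat.cast_sub h1, Nat.cast_one]
    rw [tsum_congr key, tsum_mul_right, pol.total w hw v, one_mul]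
  · rw [if_neg h]
    push_neg at h
    have h1 : pol.next w v (w ++ [v]) = 1 := pol.noMatch w hw v h
    have hzero : ∀ w' : List V', w' ≠ w ++ [v] → pol.next w v w' = 0 := by
      intro w' hne
      have hpair : ∑ x ∈ ({w ++ [v], w'} : Finset (List V')), pol.next w v x ≤
          ∑' x : List V', pol.next w v x :=
        Summable.sum_le_tsum _ (fun x _ => pol.nonneg w v x) hsum
      rw [Finset.sum_pair (Ne.symm hne), pol.total w hw v, h1] at hpair
      have := pol.nonneg w v w'
      linarith
    have key : ∀ w' : List V', pol.next w v w' * ((w'.length : ℝ)) =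
        pol.next w v w' * ((w.length : ℝ) + 1) := by
      intro w'
      by_cases he : w' = w ++ [v]
      · subst he
        push_cast [List.length_append, List.length_singleton]
        ring
      · rw [hzero w' he]; ring
    rw [tsum_congr key, tsum_mul_right, pol.total w hw v, one_mul]

lemma count_map_inl' {α β : Type*} [DecidableEq α] (inst : DecidableEq (α ⊕ β))
    (l : List α) (i : α) :
    @List.count _ (@instBEqOfDecidableEq _ inst) (Sum.inl i)
      (l.map (Sum.inl : α → α ⊕ β)) = l.count i := by
  induction l with
  | nil => simp
  | cons a t ih =>
    rw [List.map_cons,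
      @List.count_cons _ (@instBEqOfDecidableEq _ inst) (Sum.inl i) (Sum.inl a)
        (t.map Sum.inl),
      List.count_cons, ih]
    by_cases h : a = i <;> simp [h, instBEqOfDecidableEq]

lemma count_inr_zero' {α β : Type*} (inst : DecidableEq (α ⊕ β))
    (l : List α) (j : β) :
    @List.count _ (@instBEqOfDecidableEq _ inst) (Sum.inr j)
      (l.map (Sum.inl : α → α ⊕ β)) = 0 := by
  induction l with
  | nil => simp
  | cons a t ih =>
    rw [List.map_cons,
      @List.count_cons _ (@instBEqOfDecidableEq _ inst) (Sum.inr j) (Sum.inl a)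
        (t.map Sum.inl), ih]
    simp [instBEqOfDecidableEq]

end Multigraph

open Multigraph
/-- Drift comparison for the linear function `L` (the total length of
the state word): for a class-admissible policy `Φ` on `G`, a policy `Φ̂` extending `Φ`
on `Ĝ`, a measure `μ̂` extending `μ`, and a policy `Φ̌` reducing `Φ` on `Ǧ`, for every
`w ∈ 𝕎`, `Δ^Φ_μ L(w) ≤ Δ̂^Φ̂_μ̂ L(w) ≤ Δ̌^Φ̌_μ L(w)`. -/
theorem drift_linear_le_blowup_le_check {V : Type*} [Fintype V] [DecidableEq V]
    (G : Multigraph V) (hconn : G.Connected)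
    (pol : Policy G) (hca : ClassAdmissible G pol)
    (polh : Policy (blowup G)) (hext : ExtendsPolicy G pol polh)
    (polc : Policy (check G)) (hred : ReducesPolicy G pol polc)
    (μ : V → ℝ) (hμ : FullSupport μ)
    (μh : V ⊕ {v : V // G.Adj v v} → ℝ) (hμh : FullSupport μh)
    (hem : ExtendsMeasure G μ μh)
    (w : List V) (hw : w ∈ WSpace G) :
    drift G pol μ (fun u : List V => (u.length : ℝ)) w ≤
      drift (blowup G) polh μh
        (fun u : List (V ⊕ {v : V // G.Adj v v}) => (u.length : ℝ)) (w.map Sum.inl) ∧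
    drift (blowup G) polh μh
        (fun u : List (V ⊕ {v : V // G.Adj v v}) => (u.length : ℝ)) (w.map Sum.inl) ≤
      drift (check G) polc μ (fun u : List V => (u.length : ℝ)) w := by
  classical
  -- membership of `w` in the state space of the maximal subgraph
  have hwc : w ∈ WSpace (check G) := by
    constructor
    · intro i j hne hadj; exact hw.1 i j hne hadj.1
    · intro i hadj; exact absurd rfl hadj.2
  -- membership of `w.map Sum.inl` in the state space of the blow-up graph
  have hwb : (w.map (Sum.inl : V → V ⊕ {v : V // G.Adj v v})) ∈ WSpace (blowup G) := by
    constructor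
    · rintro (i | i) (j | j) hne hadj
      · rw [count_map_inl' _ w i, count_map_inl' _ w j]
        exact hw.1 i j hadj.2 hadj.1
      · exact Or.inr (count_inr_zero' _ w j)
      · exact Or.inl (count_inr_zero' _ w i)
      · exact hadj.elim
    · rintro (i | i) hadj
      · exact absurd rfl hadj.2
      · exact hadj.elim
  -- translation of match-availability conditions
  have hbl : ∀ v : V,
      (∃ a ∈ w.map (Sum.inl : V → V ⊕ {v : V // G.Adj v v}), (blowup G).Adj a (Sum.inl v)) ↔
        ∃ a ∈ w, G.Adj a v ∧ a ≠ v := by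
    intro v
    constructor
    · rintro ⟨a, ha, hadj⟩
      rw [List.mem_map] at ha
      obtain ⟨b, hb, rfl⟩ := ha
      exact ⟨b, hb, hadj⟩
    · rintro ⟨b, hb, h1, h2⟩
      exact ⟨Sum.inl b, List.mem_map_of_mem hb, h1, h2⟩
  have hbr : ∀ i : {v : V // G.Adj v v},
      (∃ a ∈ w.map (Sum.inl : V → V ⊕ {v : V // G.Adj v v}), (blowup G).Adj a (Sum.inr i)) ↔
        ∃ a ∈ w, G.Adj i.1 a := by
    intro i
    constructor
    · rintro ⟨a, ha, hadj⟩
      rw [List.mem_map] at ha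
      obtain ⟨b, hb, rfl⟩ := ha
      exact ⟨b, hb, hadj⟩
    · rintro ⟨b, hb, h1⟩
      exact ⟨Sum.inl b, List.mem_map_of_mem hb, h1⟩
  have hcheck : ∀ v : V, (∃ a ∈ w, (check G).Adj a v) ↔ ∃ a ∈ w, G.Adj a v ∧ a ≠ v := by
    intro v; exact Iff.rfl
  -- the three drifts, made explicit
  have e1 : drift G pol μ (fun u : List V => (u.length : ℝ)) w =
      (∑ v : V, μ v *
        (if ∃ a ∈ w, G.Adj a v then (w.length : ℝ) - 1 else (w.length : ℝ) + 1)) -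
        (w.length : ℝ) := by
    simp only [drift]
    congr 1
    exact Finset.sum_congr rfl fun v _ => (by rw [step_exp G pol w hw v])
  have e3 : drift (check G) polc μ (fun u : List V => (u.length : ℝ)) w =
      (∑ v : V, μ v *
        (if ∃ a ∈ w, G.Adj a v ∧ a ≠ v then (w.length : ℝ) - 1 else (w.length : ℝ) + 1)) -
        (w.length : ℝ) := by
    simp only [drift]
    congr 1
    refine Finset.sum_congr rfl fun v _ => ?_
    rw [step_exp (check G) polc w hwc v, if_congr (hcheck v) rfl rfl]
  have e2 : drift (blowup G) polh μh
      (fun u : List (V ⊕ {v : V // G.Adj v v}) => (u.length : ℝ)) (w.map Sum.inl) =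
      ((∑ v : V, μh (Sum.inl v) *
        (if ∃ a ∈ w, G.Adj a v ∧ a ≠ v then (w.length : ℝ) - 1 else (w.length : ℝ) + 1)) +
       ∑ i : {v : V // G.Adj v v}, μh (Sum.inr i) *
        (if ∃ a ∈ w, G.Adj i.1 a then (w.length : ℝ) - 1 else (w.length : ℝ) + 1)) -
        (w.length : ℝ) := by
    simp only [drift]
    rw [Fintype.sum_sum_type]
    congr 1
    · congr 1
      · refine Finset.sum_congr rfl fun v _ => ?_
        rw [step_exp (blowup G) polh (w.map Sum.inl) hwb (Sum.inl v),
          List.length_map, if_congr (hbl v) rfl rfl]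
      · refine Finset.sum_congr rfl fun i _ => ?_
        rw [step_exp (blowup G) polh (w.map Sum.inl) hwb (Sum.inr i),
          List.length_map, if_congr (hbr i) rfl rfl]
    · simp
  -- termwise comparisons of the expected new lengths
  have hab : ∀ v : V,
      (if ∃ a ∈ w, G.Adj a v then (w.length : ℝ) - 1 else (w.length : ℝ) + 1) ≤
      (if ∃ a ∈ w, G.Adj a v ∧ a ≠ v then (w.length : ℝ) - 1 else (w.length : ℝ) + 1) := by
    intro v
    by_cases hb : ∃ a ∈ w, G.Adj a v ∧ a ≠ v
    · obtain ⟨x, hx, h1, hne⟩ := hb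
      have hPa : ∃ a ∈ w, G.Adj a v := ⟨x, hx, h1⟩
      have hPb : ∃ a ∈ w, G.Adj a v ∧ a ≠ v := ⟨x, hx, h1, hne⟩
      rw [if_pos hPa, if_pos hPb]
    · rw [if_neg hb]
      split_ifs <;> linarith
  have hac : ∀ i : {v : V // G.Adj v v},
      (if ∃ a ∈ w, G.Adj a i.1 then (w.length : ℝ) - 1 else (w.length : ℝ) + 1) =
      (if ∃ a ∈ w, G.Adj i.1 a then (w.length : ℝ) - 1 else (w.length : ℝ) + 1) := by
    intro i
    refine if_congr ⟨?_, ?_⟩ rfl rfl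
    · rintro ⟨a, ha, h⟩; exact ⟨a, ha, G.symm a i.1 h⟩
    · rintro ⟨a, ha, h⟩; exact ⟨a, ha, G.symm i.1 a h⟩
  have hcb : ∀ i : {v : V // G.Adj v v},
      (if ∃ a ∈ w, G.Adj i.1 a then (w.length : ℝ) - 1 else (w.length : ℝ) + 1) ≤
      (if ∃ a ∈ w, G.Adj a i.1 ∧ a ≠ i.1 then (w.length : ℝ) - 1 else (w.length : ℝ) + 1) := by
    intro i
    by_cases hb : ∃ a ∈ w, G.Adj a i.1 ∧ a ≠ i.1
    · obtain ⟨x, hx, h1, hne⟩ := hb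
      have hPc : ∃ a ∈ w, G.Adj i.1 a := ⟨x, hx, G.symm x i.1 h1⟩
      have hPb : ∃ a ∈ w, G.Adj a i.1 ∧ a ≠ i.1 := ⟨x, hx, h1, hne⟩
      rw [if_pos hPc, if_pos hPb]
    · rw [if_neg hb]
      split_ifs <;> linarith
  have hnn : ∀ x : V ⊕ {v : V // G.Adj v v}, 0 ≤ μh x := fun x => le_of_lt (hμh.1 x)
  -- measure decomposition: `μ v = μh (inl v) + (loop part)`
  have decomp : ∀ f : V → ℝ, ∑ v : V, μ v * f v =
      (∑ v : V, μh (Sum.inl v) * f v) +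
        ∑ i : {v : V // G.Adj v v}, μh (Sum.inr i) * f i.1 := by
    intro f
    have h2 : (∑ i : {v : V // G.Adj v v}, μh (Sum.inr i) * f i.1) =
        ∑ i : {v : V // G.Adj v v}, (μ i.1 - μh (Sum.inl i.1)) * f i.1 := by
      refine Finset.sum_congr rfl fun i _ => ?_
      have := hem.2 i
      have : μh (Sum.inr i) = μ i.1 - μh (Sum.inl i.1) := by linarith
      rw [this]
    have hs : ∀ x : V, x ∈ Finset.univ.filter (fun v => G.Adj v v) ↔ G.Adj x x := by
      intro x; simp
    have h3 : (∑ i : {v : V // G.Adj v v}, (μ i.1 - μh (Sum.inl i.1)) * f i.1) =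
        ∑ v ∈ Finset.univ.filter (fun v => G.Adj v v), (μ v - μh (Sum.inl v)) * f v :=
      (Finset.sum_subtype _ hs (fun v => (μ v - μh (Sum.inl v)) * f v)).symm
    have h4 : (∑ v ∈ Finset.univ.filter (fun v => G.Adj v v), (μ v - μh (Sum.inl v)) * f v) =
        ∑ v : V, (μ v - μh (Sum.inl v)) * f v := by
      refine Finset.sum_filter_of_ne fun x _ hx => ?_
      by_contra hloop
      rw [hem.1 x hloop] at hx
      simp at hx
    rw [h2, h3, h4, ← Finset.sum_add_distrib]
    refine Finset.sum_congr rfl fun v _ => ?_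
    ring
  rw [e1, e2, e3]
  constructor
  · apply sub_le_sub_right
    rw [decomp]
    refine add_le_add ?_ ?_
    · exact Finset.sum_le_sum fun v _ => mul_le_mul_of_nonneg_left (hab v) (hnn _)
    · exact le_of_eq (Finset.sum_congr rfl fun i _ => (by rw [hac i]))
  · apply sub_le_sub_right
    rw [decomp]
    refine add_le_add le_rfl ?_
    exact Finset.sum_le_sum fun i _ => mul_le_mul_of_nonneg_left (hcb i) (hnn _)
end
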